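/- arXiv:2210.17263 — 3 statements merged into one kernel-verified Lean document; each statement's English description precedes it below -/
import Mathlib

section
/- There is a constant C depending only on α, d and 𝐝 such that for every real polynomial Q on ℝ^𝐝 of degree at most d, every x ∈ ℝ^𝐝 and all 0 < r ≤ R: ‖Q‖_{B_ρ(x,R)} ≤ C (R/r)^{d α_𝐝} ‖Q‖_{B_ρ(x,r)} and ‖Q‖_{B_ρ(x,r)} ≤ C (r/R)^{α₁} ‖Q‖_{B_ρ(x,R)}. -/
open MeasureTheory Set
open scoped ENNReal NNReal BigOperators

noncomputable section

/-- Euclidean norm on `Fin dd → ℝ`. -/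
def euclNorm {dd : ℕ} (x : Fin dd → ℝ) : ℝ := Real.sqrt (∑ i, (x i) ^ 2)

/-- Anisotropic dilation `δ_r`. -/
def dil {dd : ℕ} (α : Fin dd → ℕ) (r : ℝ) (x : Fin dd → ℝ) : Fin dd → ℝ :=
  fun i => r ^ (α i) * x i

/-- Anisotropic distance function `ρ`. -/
def rho {dd : ℕ} (α : Fin dd → ℕ) (x : Fin dd → ℝ) : ℝ :=
  sInf {r : ℝ | 0 < r ∧ euclNorm (dil α r⁻¹ x) ≤ 1}

/-- `‖Q‖_I = sup_{x,x' ∈ I} |Q(x) - Q(x')|`. -/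
def qnorm {dd : ℕ} (Q : MvPolynomial (Fin dd) ℝ) (I : Set (Fin dd → ℝ)) : ℝ :=
  ⨆ x ∈ I, ⨆ y ∈ I, |MvPolynomial.eval x Q - MvPolynomial.eval y Q|

namespace Aux

variable {dd : ℕ}

lemma qnorm_nonneg (Q : MvPolynomial (Fin dd) ℝ) (I : Set (Fin dd → ℝ)) : 0 ≤ qnorm Q I :=
  Real.iSup_nonneg fun _ => Real.iSup_nonneg fun _ => Real.iSup_nonneg fun _ =>
    Real.iSup_nonneg fun _ => abs_nonneg _

lemma qnorm_le {Q : MvPolynomial (Fin dd) ℝ} {I : Set (Fin dd → ℝ)} {M : ℝ} (hM0 : 0 ≤ M)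
    (h : ∀ a ∈ I, ∀ b ∈ I, |MvPolynomial.eval a Q - MvPolynomial.eval b Q| ≤ M) :
    qnorm Q I ≤ M :=
  Real.iSup_le (fun a => Real.iSup_le (fun ha => Real.iSup_le (fun b => Real.iSup_le
    (fun hb => h a ha b hb) hM0) hM0) hM0) hM0

lemma le_qnorm {Q : MvPolynomial (Fin dd) ℝ} {I : Set (Fin dd → ℝ)} {M : ℝ}
    (h : ∀ a ∈ I, ∀ b ∈ I, |MvPolynomial.eval a Q - MvPolynomial.eval b Q| ≤ M)
    {a b : Fin dd → ℝ} (ha : a ∈ I) (hb : b ∈ I) :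
    |MvPolynomial.eval a Q - MvPolynomial.eval b Q| ≤ qnorm Q I := by
  have hM0 : (0:ℝ) ≤ max M 0 := le_max_right _ _
  have step1 : |MvPolynomial.eval a Q - MvPolynomial.eval b Q| ≤
      ⨆ y ∈ I, |MvPolynomial.eval a Q - MvPolynomial.eval y Q| := by
    have hbdd : BddAbove (Set.range fun y =>
        ⨆ _ : y ∈ I, |MvPolynomial.eval a Q - MvPolynomial.eval y Q|) := by
      refine ⟨max M 0, Set.forall_mem_range.2 fun y => ?_⟩
      exact Real.iSup_le (fun hy => (h a ha y hy).trans (le_max_left _ _)) hM0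
    have := le_ciSup hbdd b
    rwa [ciSup_pos hb] at this
  refine step1.trans ?_
  have hbdd2 : BddAbove (Set.range fun x =>
      ⨆ _ : x ∈ I, ⨆ y ∈ I, |MvPolynomial.eval x Q - MvPolynomial.eval y Q|) := by
    refine ⟨max M 0, Set.forall_mem_range.2 fun x => ?_⟩
    refine Real.iSup_le (fun hx => ?_) hM0
    exact Real.iSup_le (fun y => Real.iSup_le (fun hy => (h x hx y hy).trans (le_max_left _ _)) hM0) hM0
  have := le_ciSup hbdd2 a
  rwa [ciSup_pos ha] at this

lemma qnorm_congr {Q Q' : MvPolynomial (Fin dd) ℝ} (I : Set (Fin dd → ℝ))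
    (h : ∀ a b, MvPolynomial.eval a Q - MvPolynomial.eval b Q =
      MvPolynomial.eval a Q' - MvPolynomial.eval b Q') :
    qnorm Q I = qnorm Q' I := by
  unfold qnorm
  exact iSup_congr fun a => iSup_congr fun _ => iSup_congr fun b => iSup_congr fun _ => by rw [h]

lemma qnorm_image {Q Q' : MvPolynomial (Fin dd) ℝ} {J : Set (Fin dd → ℝ)}
    {g : (Fin dd → ℝ) → (Fin dd → ℝ)}
    (hvals : ∀ z ∈ J, MvPolynomial.eval (g z) Q = MvPolynomial.eval z Q')
    {M : ℝ} (hM0 : 0 ≤ M)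
    (hM : ∀ z ∈ J, ∀ w ∈ J, |MvPolynomial.eval z Q' - MvPolynomial.eval w Q'| ≤ M) :
    qnorm Q (g '' J) = qnorm Q' J := by
  apply le_antisymm
  · refine qnorm_le (qnorm_nonneg _ _) ?_
    rintro a ⟨z, hz, rfl⟩ b ⟨w, hw, rfl⟩
    rw [hvals z hz, hvals w hw]
    exact le_qnorm hM hz hw
  · refine qnorm_le (qnorm_nonneg _ _) ?_
    intro z hz w hw
    rw [← hvals z hz, ← hvals w hw]
    have hM' : ∀ a ∈ g '' J, ∀ b ∈ g '' J,
        |MvPolynomial.eval a Q - MvPolynomial.eval b Q| ≤ M := by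
      rintro a ⟨z', hz', rfl⟩ b ⟨w', hw', rfl⟩
      rw [hvals z' hz', hvals w' hw']
      exact hM z' hz' w' hw'
    exact le_qnorm hM' (Set.mem_image_of_mem g hz) (Set.mem_image_of_mem g hw)

lemma qnorm_smul {Q : MvPolynomial (Fin dd) ℝ} (I : Set (Fin dd → ℝ)) {a : ℝ} (ha : 0 ≤ a) :
    qnorm (a • Q) I = a * qnorm Q I := by
  unfold qnorm
  rw [Real.mul_iSup_of_nonneg ha]
  refine iSup_congr fun x => ?_
  rw [Real.mul_iSup_of_nonneg ha]
  refine iSup_congr fun _ => ?_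
  rw [Real.mul_iSup_of_nonneg ha]
  refine iSup_congr fun y => ?_
  rw [Real.mul_iSup_of_nonneg ha]
  refine iSup_congr fun _ => ?_
  rw [MvPolynomial.smul_eval, MvPolynomial.smul_eval, ← mul_sub, abs_mul, abs_of_nonneg ha]

end Aux

namespace Aux
variable {dd : ℕ} {α : Fin dd → ℕ}

lemma euclNorm_nonneg (x : Fin dd → ℝ) : 0 ≤ euclNorm x := Real.sqrt_nonneg _

lemma euclNorm_le_one_iff {x : Fin dd → ℝ} : euclNorm x ≤ 1 ↔ (∑ i, (x i)^2) ≤ 1 := by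
  rw [euclNorm]
  have hs : (0:ℝ) ≤ ∑ i, (x i)^2 := Finset.sum_nonneg fun i _ => sq_nonneg _
  constructor
  · intro h
    nlinarith [Real.sq_sqrt hs, Real.sqrt_nonneg (∑ i, (x i)^2)]
  · intro h
    calc Real.sqrt (∑ i, (x i)^2) ≤ Real.sqrt 1 := Real.sqrt_le_sqrt h
      _ = 1 := Real.sqrt_one

lemma rhoSet_nonempty (hα : ∀ i, 0 < α i) (x : Fin dd → ℝ) :
    {r : ℝ | 0 < r ∧ euclNorm (dil α r⁻¹ x) ≤ 1}.Nonempty := by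
  set N := euclNorm x with hN
  have hN0 : 0 ≤ N := euclNorm_nonneg x
  refine ⟨1 + N, by linarith, ?_⟩
  rw [euclNorm_le_one_iff]
  have hr1 : (1:ℝ) ≤ 1 + N := by linarith
  have hinv : (1 + N)⁻¹ ≤ 1 := by
    rw [inv_le_one_iff₀]; right; exact hr1
  have hinv0 : (0:ℝ) ≤ (1+N)⁻¹ := by positivity
  have key : ∀ i, (dil α (1+N)⁻¹ x i)^2 ≤ ((1+N)⁻¹)^2 * (x i)^2 := by
    intro i
    have : ((1+N)⁻¹) ^ α i ≤ (1+N)⁻¹ := by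
      calc ((1+N)⁻¹) ^ α i ≤ ((1+N)⁻¹) ^ 1 := pow_le_pow_of_le_one hinv0 hinv (hα i)
        _ = (1+N)⁻¹ := pow_one _
    have h2 : (dil α (1+N)⁻¹ x i)^2 = (((1+N)⁻¹)^ α i)^2 * (x i)^2 := by
      rw [dil]; ring
    rw [h2]
    exact mul_le_mul_of_nonneg_right (pow_le_pow_left₀ (by positivity) this 2) (sq_nonneg _)
  calc ∑ i, (dil α (1+N)⁻¹ x i)^2 ≤ ∑ i, ((1+N)⁻¹)^2 * (x i)^2 :=
        Finset.sum_le_sum fun i _ => key i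
    _ = ((1+N)⁻¹)^2 * ∑ i, (x i)^2 := by rw [Finset.mul_sum]
    _ = ((1+N)⁻¹)^2 * N^2 := by
        rw [hN, euclNorm, Real.sq_sqrt (Finset.sum_nonneg fun i _ => sq_nonneg _)]
    _ ≤ ((1+N)⁻¹)^2 * (1+N)^2 := by
        exact mul_le_mul_of_nonneg_left (pow_le_pow_left₀ hN0 (by linarith) 2) (by positivity)
    _ = 1 := by
        rw [← mul_pow, inv_mul_cancel₀ (by linarith : (1:ℝ)+N ≠ 0), one_pow]

lemma rhoSet_upward (hα : ∀ i, 0 < α i) (x : Fin dd → ℝ) {r s : ℝ}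
    (hr : 0 < r ∧ euclNorm (dil α r⁻¹ x) ≤ 1) (hrs : r ≤ s) :
    0 < s ∧ euclNorm (dil α s⁻¹ x) ≤ 1 := by
  obtain ⟨hr0, hre⟩ := hr
  have hs0 : 0 < s := lt_of_lt_of_le hr0 hrs
  refine ⟨hs0, ?_⟩
  rw [euclNorm_le_one_iff] at hre ⊢
  refine le_trans (Finset.sum_le_sum fun i _ => ?_) hre
  have h1 : |s⁻¹ ^ α i * x i| ≤ |r⁻¹ ^ α i * x i| := by
    rw [abs_mul, abs_mul]
    refine mul_le_mul_of_nonneg_right ?_ (abs_nonneg _)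
    rw [abs_of_nonneg (by positivity), abs_of_nonneg (by positivity)]
    exact pow_le_pow_left₀ (by positivity) (inv_anti₀ hr0 hrs) _
  calc (dil α s⁻¹ x i)^2 = |dil α s⁻¹ x i|^2 := (sq_abs _).symm
    _ ≤ |dil α r⁻¹ x i|^2 := by exact pow_le_pow_left₀ (abs_nonneg _) h1 2
    _ = (dil α r⁻¹ x i)^2 := sq_abs _

end Aux

open scoped Pointwise

namespace Aux
variable {dd : ℕ} {α : Fin dd → ℕ}

lemma rho_nonneg' (hα : ∀ i, 0 < α i) (x : Fin dd → ℝ) : 0 ≤ rho α x :=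
  le_csInf (rhoSet_nonempty hα x) (fun r hr => hr.1.le)

lemma bddBelow_rhoSet (x : Fin dd → ℝ) :
    BddBelow {r : ℝ | 0 < r ∧ euclNorm (dil α r⁻¹ x) ≤ 1} :=
  ⟨0, fun r hr => hr.1.le⟩

/-- if `rho x ≤ R` and `R < s` then the defining condition holds at `s`. -/
lemma cond_of_rho_le (hα : ∀ i, 0 < α i) {x : Fin dd → ℝ} {R s : ℝ}
    (h : rho α x ≤ R) (hs : R < s) : euclNorm (dil α s⁻¹ x) ≤ 1 := by
  have hne := rhoSet_nonempty hα x
  have hlt : rho α x < s := lt_of_le_of_lt h hs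
  obtain ⟨r, hr, hrs⟩ := exists_lt_of_csInf_lt hne hlt
  exact (rhoSet_upward hα x hr hrs.le).2

lemma rho_le_of_euclNorm_le {x : Fin dd → ℝ} (h : euclNorm (dil α 1 x) ≤ 1) : rho α x ≤ 1 := by
  apply csInf_le (bddBelow_rhoSet x)
  refine ⟨one_pos, ?_⟩
  simpa using h

lemma abs_le_of_cond {x : Fin dd → ℝ} {s : ℝ} (hs : 0 < s)
    (h : euclNorm (dil α s⁻¹ x) ≤ 1) (i : Fin dd) : |x i| ≤ s ^ α i := by
  rw [euclNorm_le_one_iff] at h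
  have h1 : (dil α s⁻¹ x i)^2 ≤ 1 := by
    refine le_trans (Finset.single_le_sum (f := fun j => (dil α s⁻¹ x j)^2)
      (fun j _ => sq_nonneg _) (Finset.mem_univ i)) h
  have hsp : (0:ℝ) < s ^ α i := pow_pos hs _
  have e : dil α s⁻¹ x i = (s ^ α i)⁻¹ * x i := by rw [dil, inv_pow]
  rw [e] at h1
  have h3 : (x i)^2 ≤ (s ^ α i)^2 := by
    have hx : (x i)^2 = (s ^ α i)^2 * ((s ^ α i)⁻¹ * x i)^2 := by
      field_simp
    rw [hx]
    calc (s ^ α i)^2 * ((s ^ α i)⁻¹ * x i)^2 ≤ (s ^ α i)^2 * 1 :=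
          mul_le_mul_of_nonneg_left h1 (sq_nonneg _)
      _ = (s ^ α i)^2 := mul_one _
  calc |x i| = Real.sqrt ((x i)^2) := (Real.sqrt_sq_eq_abs _).symm
    _ ≤ Real.sqrt ((s ^ α i)^2) := Real.sqrt_le_sqrt h3
    _ = s ^ α i := by rw [Real.sqrt_sq hsp.le]

/-- points of the unit anisotropic ball lie in the unit box -/
lemma abs_le_of_rho_le (hα : ∀ i, 0 < α i) {x : Fin dd → ℝ} {R : ℝ} (hR : 0 < R)
    (h : rho α x ≤ R) (i : Fin dd) : |x i| ≤ R ^ α i := by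
  have key : ∀ s, R < s → |x i| ≤ s ^ α i := by
    intro s hs
    exact abs_le_of_cond (lt_trans hR hs) (cond_of_rho_le hα h hs) i
  have htend : Filter.Tendsto (fun s : ℝ => s ^ α i) (nhdsWithin R (Set.Ioi R)) (nhds (R ^ α i)) :=
    ((continuous_pow (α i)).continuousAt).continuousWithinAt.tendsto
  refine ge_of_tendsto htend ?_
  filter_upwards [self_mem_nhdsWithin] with s hs
  exact key s hs

end Aux

namespace Aux
variable {dd : ℕ} {α : Fin dd → ℕ}

lemma dil_comp (a b : ℝ) (z : Fin dd → ℝ) : dil α a (dil α b z) = dil α (a * b) z := by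
  funext i
  simp only [dil, mul_pow]
  ring

lemma rho_dil (hα : ∀ i, 0 < α i) {t : ℝ} (ht : 0 < t) (z : Fin dd → ℝ) :
    rho α (dil α t z) = t * rho α z := by
  have hset : {r : ℝ | 0 < r ∧ euclNorm (dil α r⁻¹ (dil α t z)) ≤ 1}
      = t • {r : ℝ | 0 < r ∧ euclNorm (dil α r⁻¹ z) ≤ 1} := by
    ext r
    rw [Set.mem_smul_set_iff_inv_smul_mem₀ (ne_of_gt ht), smul_eq_mul, Set.mem_setOf_eq,
      Set.mem_setOf_eq, dil_comp, mul_inv_rev, inv_inv]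
    constructor
    · rintro ⟨hr0, hre⟩
      exact ⟨by positivity, hre⟩
    · rintro ⟨hr0, hre⟩
      have hr0' : 0 < r := by
        have := mul_pos ht hr0
        rwa [← mul_assoc, mul_inv_cancel₀ (ne_of_gt ht), one_mul] at this
      exact ⟨hr0', hre⟩
  rw [rho, rho, hset, Real.sInf_smul_of_nonneg ht.le]
  rfl

lemma dil_inv_cancel {t : ℝ} (ht : t ≠ 0) (z : Fin dd → ℝ) : dil α t (dil α t⁻¹ z) = z := by
  rw [dil_comp, mul_inv_cancel₀ ht]
  funext i
  simp [dil]

/-- the anisotropic ball of radius t (centered 0) is the dilate of the unit ball. -/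
lemma ball0_eq_dil_image (hα : ∀ i, 0 < α i) {t : ℝ} (ht : 0 < t) :
    {z : Fin dd → ℝ | rho α z ≤ t} = (dil α t) '' {z | rho α z ≤ 1} := by
  ext w
  constructor
  · intro hw
    refine ⟨dil α t⁻¹ w, ?_, dil_inv_cancel (ne_of_gt ht) w⟩
    rw [Set.mem_setOf_eq, rho_dil hα (by positivity)]
    calc t⁻¹ * rho α w ≤ t⁻¹ * t := by
          exact mul_le_mul_of_nonneg_left hw (by positivity)
      _ = 1 := inv_mul_cancel₀ (ne_of_gt ht)
  · rintro ⟨z, hz, rfl⟩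
    rw [Set.mem_setOf_eq, rho_dil hα ht]
    calc t * rho α z ≤ t * 1 := mul_le_mul_of_nonneg_left hz ht.le
      _ = t := mul_one t

/-- the ball centered x of radius s·t as image of ball0 t under z ↦ x - dil s z -/
lemma ballx_eq_image (hα : ∀ i, 0 < α i) (x : Fin dd → ℝ) {s t : ℝ} (hs : 0 < s) (ht : 0 < t) :
    {y : Fin dd → ℝ | rho α (x - y) ≤ s * t} = (fun z => x - dil α s z) '' {z | rho α z ≤ t} := by
  ext y
  constructor
  · intro hy
    refine ⟨dil α s⁻¹ (x - y), ?_, ?_⟩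
    · rw [Set.mem_setOf_eq, rho_dil hα (by positivity)]
      calc s⁻¹ * rho α (x - y) ≤ s⁻¹ * (s * t) := by
            exact mul_le_mul_of_nonneg_left hy (by positivity)
        _ = t := by field_simp
    · show x - dil α s (dil α s⁻¹ (x - y)) = y
      rw [dil_inv_cancel (ne_of_gt hs)]
      abel
  · rintro ⟨z, hz, rfl⟩
    rw [Set.mem_setOf_eq, show x - (x - dil α s z) = dil α s z by abel, rho_dil hα hs]
    exact mul_le_mul_of_nonneg_left hz hs.le

end Aux

namespace Aux2
open MvPolynomial

variable {dd : ℕ}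

/-- index set: nonzero multi-indices of degree at most d -/
def Kset (dd d : ℕ) : Finset ((Fin dd) →₀ ℕ) :=
  Finset.filter (fun k => (k.sum fun _ e => e) ≤ d ∧ k ≠ 0)
    ((Fintype.piFinset fun _ : Fin dd => Finset.range (d+1)).image
      fun v => Finsupp.equivFunOnFinite.symm v)

lemma single_le_deg (k : (Fin dd) →₀ ℕ) (i : Fin dd) : k i ≤ k.sum fun _ e => e := by
  by_cases h : k i = 0
  · simp [h]
  · have hi : i ∈ k.support := Finsupp.mem_support_iff.2 h
    exact Finset.single_le_sum (f := fun j => k j) (fun j _ => Nat.zero_le _) hi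

lemma mem_Kset {d : ℕ} {k : (Fin dd) →₀ ℕ} :
    k ∈ Kset dd d ↔ (k.sum fun _ e => e) ≤ d ∧ k ≠ 0 := by
  constructor
  · intro h; exact (Finset.mem_filter.1 h).2
  · intro h
    refine Finset.mem_filter.2 ⟨?_, h⟩
    refine Finset.mem_image.2 ⟨⇑k, ?_, ?_⟩
    · refine Fintype.mem_piFinset.2 fun i => ?_
      exact Finset.mem_range.2 (Nat.lt_succ_of_le ((single_le_deg k i).trans h.1))
    · exact Finsupp.equivFunOnFinite_symm_coe k

variable {d : ℕ}

def toPoly (c : ↥(Kset dd d) → ℝ) : MvPolynomial (Fin dd) ℝ :=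
  ∑ k : ↥(Kset dd d), MvPolynomial.monomial k.1 (c k)

lemma coeff_toPoly (c : ↥(Kset dd d) → ℝ) (j : (Fin dd) →₀ ℕ) :
    MvPolynomial.coeff j (toPoly c) = if h : j ∈ Kset dd d then c ⟨j, h⟩ else 0 := by
  rw [toPoly, MvPolynomial.coeff_sum]
  by_cases h : j ∈ Kset dd d
  · rw [dif_pos h]
    rw [Finset.sum_eq_single (⟨j, h⟩ : ↥(Kset dd d))]
    · rw [MvPolynomial.coeff_monomial, if_pos rfl]
    · intro b _ hb
      rw [MvPolynomial.coeff_monomial, if_neg]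
      exact fun hc => hb (Subtype.ext hc)
    · intro hb; exact absurd (Finset.mem_univ _) hb
  · rw [dif_neg h]
    refine Finset.sum_eq_zero fun k _ => ?_
    rw [MvPolynomial.coeff_monomial, if_neg]
    rintro rfl
    exact h k.2

lemma toPoly_sub (c c' : ↥(Kset dd d) → ℝ) : toPoly (c - c') = toPoly c - toPoly c' := by
  unfold toPoly
  rw [← Finset.sum_sub_distrib]
  refine Finset.sum_congr rfl fun k _ => ?_
  rw [Pi.sub_apply, map_sub]

lemma toPoly_smul (a : ℝ) (c : ↥(Kset dd d) → ℝ) : toPoly (a • c) = a • toPoly c := by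
  unfold toPoly
  rw [Finset.smul_sum]
  refine Finset.sum_congr rfl fun k _ => ?_
  rw [Pi.smul_apply, MvPolynomial.smul_monomial, smul_eq_mul]

lemma toPoly_zero : (toPoly (0 : ↥(Kset dd d) → ℝ)) = 0 := by
  unfold toPoly
  refine Finset.sum_eq_zero fun k _ => ?_
  simp

lemma eval_toPoly (c : ↥(Kset dd d) → ℝ) (z : Fin dd → ℝ) :
    MvPolynomial.eval z (toPoly c) =
      ∑ k : ↥(Kset dd d), c k * (k.1.prod fun i e => z i ^ e) := by
  unfold toPoly
  rw [map_sum]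
  exact Finset.sum_congr rfl fun k _ => MvPolynomial.eval_monomial

end Aux2

namespace Aux3
open MvPolynomial Aux Aux2

variable {dd d : ℕ} {α : Fin dd → ℕ}

/-- bound for polynomial evaluation on the unit box -/
lemma absEval_le (P : MvPolynomial (Fin dd) ℝ) {z : Fin dd → ℝ} (hz : ∀ i, |z i| ≤ 1) :
    |MvPolynomial.eval z P| ≤ ∑ k ∈ P.support, |MvPolynomial.coeff k P| := by
  rw [MvPolynomial.eval_eq]
  refine (Finset.abs_sum_le_sum_abs _ _).trans ?_
  refine Finset.sum_le_sum fun k _ => ?_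
  rw [abs_mul]
  have hprod : |∏ i ∈ k.support, z i ^ k i| ≤ 1 := by
    rw [Finset.abs_prod]
    refine Finset.prod_le_one (fun i _ => abs_nonneg _) fun i _ => ?_
    rw [abs_pow]
    exact pow_le_one₀ (abs_nonneg _) (hz i)
  calc |MvPolynomial.coeff k P| * |∏ i ∈ k.support, z i ^ k i|
      ≤ |MvPolynomial.coeff k P| * 1 := mul_le_mul_of_nonneg_left hprod (abs_nonneg _)
    _ = _ := mul_one _

/-- membership in unit anisotropic ball gives unit box -/
lemma mem_box_of_S1 (hα : ∀ i, 0 < α i) {z : Fin dd → ℝ} (hz : rho α z ≤ 1) (i : Fin dd) :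
    |z i| ≤ 1 := by
  have := abs_le_of_rho_le hα one_pos hz i
  rwa [one_pow] at this

/-- generic pair bound on the unit anisotropic ball -/
lemma pair_bound (hα : ∀ i, 0 < α i) (P : MvPolynomial (Fin dd) ℝ) :
    ∀ a ∈ {z : Fin dd → ℝ | rho α z ≤ 1}, ∀ b ∈ {z | rho α z ≤ 1},
      |MvPolynomial.eval a P - MvPolynomial.eval b P| ≤
        2 * ∑ k ∈ P.support, |MvPolynomial.coeff k P| := by
  intro a ha b hb
  have h1 := absEval_le P (fun i => mem_box_of_S1 hα ha i)
  have h2 := absEval_le P (fun i => mem_box_of_S1 hα hb i)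
  calc |MvPolynomial.eval a P - MvPolynomial.eval b P|
      ≤ |MvPolynomial.eval a P| + |MvPolynomial.eval b P| := abs_sub _ _
    _ ≤ 2 * ∑ k ∈ P.support, |MvPolynomial.coeff k P| := by linarith

/-- weighted degree -/
def wdeg (α : Fin dd → ℕ) (k : (Fin dd) →₀ ℕ) : ℕ := k.sum fun i e => α i * e

/-- coefficient dilation -/
def sig (α : Fin dd → ℕ) (d : ℕ) (t : ℝ) (c : ↥(Kset dd d) → ℝ) : ↥(Kset dd d) → ℝ :=
  fun k => t ^ (wdeg α k.1) * c k

lemma eval_dil_toPoly (t : ℝ) (c : ↥(Kset dd d) → ℝ) (z : Fin dd → ℝ) :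
    MvPolynomial.eval (dil α t z) (toPoly c) = MvPolynomial.eval z (toPoly (sig α d t c)) := by
  rw [eval_toPoly, eval_toPoly]
  refine Finset.sum_congr rfl fun k _ => ?_
  rw [sig]
  have : (k.1.prod fun i e => dil α t z i ^ e) =
      t ^ (wdeg α k.1) * (k.1.prod fun i e => z i ^ e) := by
    simp only [wdeg, Finsupp.prod, Finsupp.sum]
    rw [← Finset.prod_pow_eq_pow_sum, ← Finset.prod_mul_distrib]
    refine Finset.prod_congr rfl fun i _ => ?_
    rw [dil]
    rw [mul_pow, ← pow_mul]
  rw [this]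
  ring

/-- coefficient vector of a polynomial -/
def coeffVec (d : ℕ) (P : MvPolynomial (Fin dd) ℝ) : ↥(Kset dd d) → ℝ :=
  fun k => MvPolynomial.coeff k.1 P

lemma decomp {P : MvPolynomial (Fin dd) ℝ} (hP : P.totalDegree ≤ d) :
    P = MvPolynomial.C (MvPolynomial.coeff 0 P) + toPoly (coeffVec d P) := by
  apply MvPolynomial.ext
  intro j
  classical
  rw [MvPolynomial.coeff_add, coeff_toPoly, MvPolynomial.coeff_C]
  by_cases hj : j = 0
  · subst hj
    rw [if_pos rfl, dif_neg, add_zero]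
    intro h
    exact (mem_Kset.1 h).2 rfl
  · rw [if_neg (fun h => hj h.symm)]
    by_cases hjK : j ∈ Kset dd d
    · rw [dif_pos hjK, coeffVec, zero_add]
    · rw [dif_neg hjK, zero_add]
      have hdeg : d < j.sum fun _ e => e := by
        by_contra hle
        exact hjK (mem_Kset.2 ⟨Nat.le_of_not_lt hle, hj⟩)
      refine MvPolynomial.coeff_eq_zero_of_totalDegree_lt ?_
      calc P.totalDegree ≤ d := hP
        _ < j.sum fun _ e => e := hdeg
        _ = ∑ i ∈ j.support, j i := rfl

lemma qnorm_C (a : ℝ) (I : Set (Fin dd → ℝ)) : qnorm (MvPolynomial.C a) I = 0 := by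
  refine le_antisymm (qnorm_le le_rfl fun x _ y _ => ?_) (qnorm_nonneg _ _)
  simp

end Aux3

namespace Aux4
open MvPolynomial Aux Aux2 Aux3

variable {dd : ℕ} {α : Fin dd → ℕ}

lemma euclNorm_smul (t : ℝ) (w : Fin dd → ℝ) :
    euclNorm (fun i => w i * t) = |t| * euclNorm w := by
  unfold euclNorm
  have : ∑ i, (w i * t)^2 = t^2 * ∑ i, (w i)^2 := by
    rw [Finset.mul_sum]; refine Finset.sum_congr rfl fun i _ => by ring
  rw [this, Real.sqrt_mul (sq_nonneg t), Real.sqrt_sq_eq_abs]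

lemma eval_line (P : MvPolynomial (Fin dd) ℝ) (w : Fin dd → ℝ) :
    ∃ q : Polynomial ℝ, ∀ t : ℝ,
      Polynomial.eval t q = MvPolynomial.eval (fun i => w i * t) P := by
  refine ⟨MvPolynomial.eval₂ Polynomial.C (fun i => Polynomial.C (w i) * Polynomial.X) P, ?_⟩
  intro t
  have h := MvPolynomial.eval₂_comp_left (Polynomial.evalRingHom t) Polynomial.C
    (fun i => Polynomial.C (w i) * Polynomial.X) P
  have h2 : (Polynomial.evalRingHom t).comp Polynomial.C = RingHom.id ℝ := by
    ext a; simp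
  rw [h2] at h
  have h3 : (⇑(Polynomial.evalRingHom t) ∘ fun i => Polynomial.C (w i) * Polynomial.X)
      = fun i => w i * t := by
    funext i; simp
  rw [h3] at h
  exact h

/-- a polynomial which is constant on the unit anisotropic ball is a constant -/
lemma eq_C_of_const_on_S1 (hα : ∀ i, 0 < α i) {P : MvPolynomial (Fin dd) ℝ}
    (h : ∀ a ∈ {z : Fin dd → ℝ | rho α z ≤ 1}, ∀ b ∈ {z | rho α z ≤ 1},
      MvPolynomial.eval a P = MvPolynomial.eval b P) :
    P = MvPolynomial.C (MvPolynomial.eval 0 P) := by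
  have h0 : (0 : Fin dd → ℝ) ∈ {z : Fin dd → ℝ | rho α z ≤ 1} := by
    rw [Set.mem_setOf_eq]
    apply rho_le_of_euclNorm_le
    have : dil α (1:ℝ) (0 : Fin dd → ℝ) = 0 := by funext i; simp [dil]
    rw [this]
    simp [euclNorm]
  set R : MvPolynomial (Fin dd) ℝ := P - MvPolynomial.C (MvPolynomial.eval 0 P) with hR
  have hRz : ∀ z ∈ {z : Fin dd → ℝ | rho α z ≤ 1}, MvPolynomial.eval z R = 0 := by
    intro z hz
    rw [hR, map_sub, MvPolynomial.eval_C, h z hz 0 h0, sub_self]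
  have hR0 : R = 0 := by
    apply MvPolynomial.funext
    intro w
    obtain ⟨q, hq⟩ := eval_line R w
    have hN : 0 ≤ euclNorm w := euclNorm_nonneg w
    set ε : ℝ := (1 + euclNorm w)⁻¹ with hε
    have hε0 : 0 < ε := by rw [hε]; positivity
    have hroots : Set.Icc (0:ℝ) ε ⊆ {t | Polynomial.IsRoot q t} := by
      intro t ht
      have htub : |t| ≤ ε := by
        rw [abs_of_nonneg ht.1]; exact ht.2
      have hmem : (fun i => w i * t) ∈ {z : Fin dd → ℝ | rho α z ≤ 1} := by
        rw [Set.mem_setOf_eq]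
        apply rho_le_of_euclNorm_le
        have : dil α (1:ℝ) (fun i => w i * t) = fun i => w i * t := by
          funext i; simp [dil]
        rw [this, euclNorm_smul]
        calc |t| * euclNorm w ≤ ε * euclNorm w :=
              mul_le_mul_of_nonneg_right htub hN
          _ ≤ ε * (1 + euclNorm w) := by
              exact mul_le_mul_of_nonneg_left (by linarith) hε0.le
          _ = 1 := by rw [hε]; field_simp
      show Polynomial.IsRoot q t
      rw [Polynomial.IsRoot, hq t, hRz _ hmem]
    have hq0 : q = 0 :=
      Polynomial.eq_zero_of_infinite_isRoot q
        (Set.Infinite.mono hroots (Set.Icc_infinite hε0))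
    have h1 := hq 1
    rw [hq0] at h1
    simp only [Polynomial.eval_zero] at h1
    have h2 : MvPolynomial.eval w R = 0 := by simpa using h1.symm
    simpa using h2
  exact sub_eq_zero.1 hR0

end Aux4

namespace Aux5
open MvPolynomial Aux Aux2 Aux3 Aux4

variable {dd d : ℕ} {α : Fin dd → ℕ}

lemma absEval_toPoly_le (hα : ∀ i, 0 < α i) (c : ↥(Kset dd d) → ℝ) {z : Fin dd → ℝ}
    (hz : z ∈ {z : Fin dd → ℝ | rho α z ≤ 1}) :
    |MvPolynomial.eval z (toPoly c)| ≤ ∑ k : ↥(Kset dd d), |c k| := by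
  rw [eval_toPoly]
  refine (Finset.abs_sum_le_sum_abs _ _).trans ?_
  refine Finset.sum_le_sum fun k _ => ?_
  rw [abs_mul]
  have hprod : |k.1.prod fun i e => z i ^ e| ≤ 1 := by
    rw [Finsupp.prod, Finset.abs_prod]
    refine Finset.prod_le_one (fun i _ => abs_nonneg _) fun i _ => ?_
    rw [abs_pow]
    exact pow_le_one₀ (abs_nonneg _) (mem_box_of_S1 hα hz i)
  calc |c k| * |k.1.prod fun i e => z i ^ e| ≤ |c k| * 1 :=
        mul_le_mul_of_nonneg_left hprod (abs_nonneg _)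
    _ = |c k| := mul_one _

lemma pairBound_toPoly (hα : ∀ i, 0 < α i) (c : ↥(Kset dd d) → ℝ) :
    ∀ a ∈ {z : Fin dd → ℝ | rho α z ≤ 1}, ∀ b ∈ {z : Fin dd → ℝ | rho α z ≤ 1},
      |MvPolynomial.eval a (toPoly c) - MvPolynomial.eval b (toPoly c)| ≤
        2 * ∑ k : ↥(Kset dd d), |c k| := by
  intro a ha b hb
  have h1 := absEval_toPoly_le hα c ha
  have h2 := absEval_toPoly_le hα c hb
  calc |MvPolynomial.eval a (toPoly c) - MvPolynomial.eval b (toPoly c)|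
      ≤ |MvPolynomial.eval a (toPoly c)| + |MvPolynomial.eval b (toPoly c)| := abs_sub _ _
    _ ≤ 2 * ∑ k : ↥(Kset dd d), |c k| := by linarith

lemma sumAbs_nonneg (c : ↥(Kset dd d) → ℝ) : 0 ≤ ∑ k : ↥(Kset dd d), |c k| :=
  Finset.sum_nonneg fun k _ => abs_nonneg _

lemma sumAbs_le (c : ↥(Kset dd d) → ℝ) :
    ∑ k : ↥(Kset dd d), |c k| ≤ (Fintype.card ↥(Kset dd d)) * ‖c‖ := by
  have h : ∀ k ∈ Finset.univ, |c k| ≤ ‖c‖ := by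
    intro k _
    have := norm_le_pi_norm c k
    rwa [Real.norm_eq_abs] at this
  have := Finset.sum_le_card_nsmul Finset.univ (fun k => |c k|) ‖c‖ h
  rwa [Finset.card_univ, nsmul_eq_mul] at this

lemma qnorm_toPoly_sub_le (hα : ∀ i, 0 < α i) (c c' : ↥(Kset dd d) → ℝ) :
    qnorm (toPoly c) {z : Fin dd → ℝ | rho α z ≤ 1} ≤
      qnorm (toPoly c') {z : Fin dd → ℝ | rho α z ≤ 1} + 2 * ∑ k : ↥(Kset dd d), |(c - c') k| := by
  refine qnorm_le (add_nonneg (qnorm_nonneg _ _)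
    (mul_nonneg (by norm_num) (sumAbs_nonneg _))) ?_
  intro a ha b hb
  have key : MvPolynomial.eval a (toPoly c) - MvPolynomial.eval b (toPoly c) =
      (MvPolynomial.eval a (toPoly c') - MvPolynomial.eval b (toPoly c')) +
      (MvPolynomial.eval a (toPoly (c - c')) - MvPolynomial.eval b (toPoly (c - c'))) := by
    rw [toPoly_sub, map_sub, map_sub]; ring
  rw [key]
  have hd1 := absEval_toPoly_le hα (c - c') ha
  have hd2 := absEval_toPoly_le hα (c - c') hb
  have hq := le_qnorm (pairBound_toPoly hα c') ha hb
  have habs := abs_add_le (MvPolynomial.eval a (toPoly c') - MvPolynomial.eval b (toPoly c'))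
    (MvPolynomial.eval a (toPoly (c - c')) - MvPolynomial.eval b (toPoly (c - c')))
  have habs2 := abs_sub (MvPolynomial.eval a (toPoly (c - c')))
    (MvPolynomial.eval b (toPoly (c - c')))
  linarith

lemma continuous_f (hα : ∀ i, 0 < α i) :
    Continuous (fun c : ↥(Kset dd d) → ℝ => qnorm (toPoly c) {z : Fin dd → ℝ | rho α z ≤ 1}) := by
  set S1 := {z : Fin dd → ℝ | rho α z ≤ 1}
  have key : ∀ c c' : ↥(Kset dd d) → ℝ,
      qnorm (toPoly c) S1 - qnorm (toPoly c') S1 ≤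
        2 * (Fintype.card ↥(Kset dd d)) * ‖c - c'‖ := by
    intro c c'
    have h1 := qnorm_toPoly_sub_le hα c c'
    have h2 := sumAbs_le (c - c')
    have : (0:ℝ) ≤ (Fintype.card ↥(Kset dd d)) := by positivity
    nlinarith
  have hlip : ∀ c c' : ↥(Kset dd d) → ℝ,
      dist (qnorm (toPoly c) S1) (qnorm (toPoly c') S1) ≤
        2 * (Fintype.card ↥(Kset dd d)) * dist c c' := by
    intro c c'
    rw [Real.dist_eq, dist_eq_norm]
    rw [abs_le]
    constructor
    · have := key c' c
      rw [show ‖c' - c‖ = ‖c - c'‖ from norm_sub_rev c' c] at this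
      linarith
    · exact key c c'
  have : LipschitzWith (Real.toNNReal (2 * (Fintype.card ↥(Kset dd d)))) _ :=
    LipschitzWith.of_dist_le_mul (K := Real.toNNReal (2 * (Fintype.card ↥(Kset dd d))))
      (fun c c' => by
        refine (hlip c c').trans ?_
        have : ((Real.toNNReal (2 * (Fintype.card ↥(Kset dd d)))) : ℝ)
            = 2 * (Fintype.card ↥(Kset dd d)) := Real.coe_toNNReal _ (by positivity)
        rw [this])
  exact this.continuous

lemma f_le_norm (hα : ∀ i, 0 < α i) (c : ↥(Kset dd d) → ℝ) :
    qnorm (toPoly c) {z : Fin dd → ℝ | rho α z ≤ 1} ≤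
      2 * (Fintype.card ↥(Kset dd d)) * ‖c‖ := by
  refine qnorm_le (by positivity) ?_
  intro a ha b hb
  refine (pairBound_toPoly hα c a ha b hb).trans ?_
  have := sumAbs_le c
  nlinarith [sumAbs_nonneg c]

lemma coeff_toPoly_mem (c : ↥(Kset dd d) → ℝ) (k : ↥(Kset dd d)) :
    MvPolynomial.coeff k.1 (toPoly c) = c k := by
  rw [coeff_toPoly, dif_pos k.2]

lemma exists_c2 (hα : ∀ i, 0 < α i) (hK : (Kset dd d).Nonempty) :
    ∃ c2 : ℝ, 0 < c2 ∧ ∀ c : ↥(Kset dd d) → ℝ,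
      c2 * ‖c‖ ≤ qnorm (toPoly c) {z : Fin dd → ℝ | rho α z ≤ 1} := by
  set S1 := {z : Fin dd → ℝ | rho α z ≤ 1} with hS1
  set f : (↥(Kset dd d) → ℝ) → ℝ := fun c => qnorm (toPoly c) S1 with hf
  obtain ⟨k0, hk0⟩ := hK
  haveI : Nonempty ↥(Kset dd d) := ⟨⟨k0, hk0⟩⟩
  have hsne : (Metric.sphere (0 : ↥(Kset dd d) → ℝ) 1).Nonempty :=
    NormedSpace.sphere_nonempty.2 zero_le_one
  obtain ⟨u, hu, hmin⟩ := (isCompact_sphere (0 : ↥(Kset dd d) → ℝ) 1).exists_isMinOn hsne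
    ((continuous_f hα).continuousOn)
  have hu1 : ‖u‖ = 1 := by rwa [mem_sphere_zero_iff_norm] at hu
  have hu0 : u ≠ 0 := by
    intro h; rw [h, norm_zero] at hu1; norm_num at hu1
  have hfu : 0 < f u := by
    rcases lt_or_eq_of_le (qnorm_nonneg (toPoly u) S1) with h | h
    · exact h
    · exfalso
      apply hu0
      have hconst : ∀ a ∈ S1, ∀ b ∈ S1,
          MvPolynomial.eval a (toPoly u) = MvPolynomial.eval b (toPoly u) := by
        intro a ha b hb
        have := le_qnorm (pairBound_toPoly hα u) ha hb
        rw [← h] at this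
        have habs := abs_nonneg (MvPolynomial.eval a (toPoly u) - MvPolynomial.eval b (toPoly u))
        have : |MvPolynomial.eval a (toPoly u) - MvPolynomial.eval b (toPoly u)| = 0 := le_antisymm this habs
        have := abs_eq_zero.1 this
        linarith
      have hC := eq_C_of_const_on_S1 hα hconst
      funext k
      have h1 := coeff_toPoly_mem u k
      rw [hC] at h1
      have hk1 : k.1 ≠ 0 := (mem_Kset.1 k.2).2
      rw [MvPolynomial.coeff_C, if_neg (fun hh => hk1 hh.symm)] at h1
      rw [Pi.zero_apply, ← h1]
  refine ⟨f u, hfu, fun c => ?_⟩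
  by_cases hc : c = 0
  · subst hc
    rw [norm_zero, mul_zero]
    exact qnorm_nonneg _ _
  · have hcn : 0 < ‖c‖ := norm_pos_iff.2 hc
    have hmem : ‖c‖⁻¹ • c ∈ Metric.sphere (0 : ↥(Kset dd d) → ℝ) 1 := by
      rw [mem_sphere_zero_iff_norm]
      exact norm_smul_inv_norm hc
    have hle : f u ≤ f (‖c‖⁻¹ • c) := isMinOn_iff.1 hmin _ hmem
    have heq : f (‖c‖⁻¹ • c) = ‖c‖⁻¹ * f c := by
      rw [hf]
      simp only
      rw [toPoly_smul, qnorm_smul _ (by positivity)]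
    rw [heq] at hle
    calc f u * ‖c‖ ≤ (‖c‖⁻¹ * f c) * ‖c‖ := mul_le_mul_of_nonneg_right hle hcn.le
      _ = f c := by field_simp

lemma norm_sig_le {μ : ℕ} (hlow : ∀ k ∈ Kset dd d, μ ≤ wdeg α k) {t : ℝ}
    (ht0 : 0 < t) (ht1 : t ≤ 1) (c : ↥(Kset dd d) → ℝ) :
    ‖sig α d t c‖ ≤ t ^ μ * ‖c‖ := by
  refine (pi_norm_le_iff_of_nonneg (by positivity)).2 fun k => ?_
  rw [Real.norm_eq_abs, sig, abs_mul, abs_pow, abs_of_pos ht0]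
  have h1 : t ^ wdeg α k.1 ≤ t ^ μ := pow_le_pow_of_le_one ht0.le ht1 (hlow k.1 k.2)
  have h2 : |c k| ≤ ‖c‖ := by
    have := norm_le_pi_norm c k
    rwa [Real.norm_eq_abs] at this
  exact mul_le_mul h1 h2 (abs_nonneg _) (by positivity)

lemma norm_le_sig {D : ℕ} (hhigh : ∀ k ∈ Kset dd d, wdeg α k ≤ D) {t : ℝ}
    (ht0 : 0 < t) (ht1 : t ≤ 1) (c : ↥(Kset dd d) → ℝ) :
    ‖c‖ ≤ (t⁻¹) ^ D * ‖sig α d t c‖ := by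
  refine (pi_norm_le_iff_of_nonneg (by positivity)).2 fun k => ?_
  have htinv : (1:ℝ) ≤ t⁻¹ := (one_le_inv₀ ht0).2 ht1
  have h1 : (t⁻¹) ^ wdeg α k.1 ≤ (t⁻¹) ^ D := pow_le_pow_right₀ htinv (hhigh k.1 k.2)
  have h2 : |sig α d t c k| ≤ ‖sig α d t c‖ := by
    have := norm_le_pi_norm (sig α d t c) k
    rwa [Real.norm_eq_abs] at this
  have key : |c k| = (t⁻¹) ^ wdeg α k.1 * |sig α d t c k| := by
    rw [sig, abs_mul, abs_pow, abs_of_pos ht0, ← mul_assoc, inv_pow, inv_mul_cancel₀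
      (by positivity), one_mul]
  rw [Real.norm_eq_abs, key]
  exact mul_le_mul h1 h2 (abs_nonneg _) (by positivity)


end Aux5

namespace Aux6
open MvPolynomial Aux Aux2 Aux3 Aux4 Aux5

variable {dd : ℕ}

lemma totalDegree_bind₁_le (g : Fin dd → MvPolynomial (Fin dd) ℝ)
    (hg : ∀ i, (g i).totalDegree ≤ 1) (Q : MvPolynomial (Fin dd) ℝ) :
    (MvPolynomial.bind₁ g Q).totalDegree ≤ Q.totalDegree := by
  conv_lhs => rw [← MvPolynomial.support_sum_monomial_coeff Q]
  rw [map_sum]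
  refine (MvPolynomial.totalDegree_finset_sum _ _).trans ?_
  refine Finset.sup_le fun k hk => ?_
  rw [MvPolynomial.bind₁_monomial]
  refine (MvPolynomial.totalDegree_mul _ _).trans ?_
  rw [MvPolynomial.totalDegree_C, zero_add]
  refine (MvPolynomial.totalDegree_finset_prod _ _).trans ?_
  calc ∑ i ∈ k.support, (g i ^ k i).totalDegree
      ≤ ∑ i ∈ k.support, k i := by
        refine Finset.sum_le_sum fun i _ => ?_
        refine (MvPolynomial.totalDegree_pow _ _).trans ?_
        calc k i * (g i).totalDegree ≤ k i * 1 :=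
              Nat.mul_le_mul_left _ (hg i)
          _ = k i := Nat.mul_one _
    _ ≤ Q.totalDegree := MvPolynomial.le_totalDegree hk

lemma eval_bind₁' (g : Fin dd → MvPolynomial (Fin dd) ℝ) (Q : MvPolynomial (Fin dd) ℝ)
    (z : Fin dd → ℝ) :
    MvPolynomial.eval z (MvPolynomial.bind₁ g Q) =
      MvPolynomial.eval (fun i => MvPolynomial.eval z (g i)) Q := by
  exact MvPolynomial.eval₂Hom_bind₁ (RingHom.id ℝ) z g Q

end Aux6

namespace Aux7
open MvPolynomial Aux Aux2 Aux3 Aux4 Aux5 Aux6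

lemma wlow {m d : ℕ} {α : Fin (m+1) → ℕ} (hα : ∀ i, 0 < α i) (hmono : Monotone α) :
    ∀ k ∈ Kset (m+1) d, α 0 ≤ wdeg α k := by
  intro k hk
  obtain ⟨hdeg, hne⟩ := mem_Kset.1 hk
  obtain ⟨i0, hi0⟩ := Finsupp.support_nonempty_iff.2 hne
  have h1 : α i0 * k i0 ≤ wdeg α k := by
    rw [wdeg, Finsupp.sum]
    exact Finset.single_le_sum (f := fun i => α i * k i) (fun i _ => Nat.zero_le _) hi0
  have h2 : 1 ≤ k i0 := Nat.one_le_iff_ne_zero.2 (Finsupp.mem_support_iff.1 hi0)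
  calc α 0 ≤ α i0 := hmono (Fin.zero_le i0)
    _ = α i0 * 1 := (Nat.mul_one _).symm
    _ ≤ α i0 * k i0 := Nat.mul_le_mul_left _ h2
    _ ≤ wdeg α k := h1

lemma whigh {m d : ℕ} {α : Fin (m+1) → ℕ} (hmono : Monotone α) :
    ∀ k ∈ Kset (m+1) d, wdeg α k ≤ d * α (Fin.last m) := by
  intro k hk
  obtain ⟨hdeg, _⟩ := mem_Kset.1 hk
  calc wdeg α k = ∑ i ∈ k.support, α i * k i := rfl
    _ ≤ ∑ i ∈ k.support, α (Fin.last m) * k i := by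
        refine Finset.sum_le_sum fun i _ => ?_
        exact Nat.mul_le_mul_right _ (hmono (Fin.le_last i))
    _ = α (Fin.last m) * ∑ i ∈ k.support, k i := by rw [Finset.mul_sum]
    _ ≤ α (Fin.last m) * d := Nat.mul_le_mul_left _ hdeg
    _ = d * α (Fin.last m) := Nat.mul_comm _ _

end Aux7

theorem statement6 (m d : ℕ) (α : Fin (m + 1) → ℕ) (hα : ∀ i, 0 < α i)
    (hmono : Monotone α) :
    ∃ C : ℝ, 0 < C ∧
      ∀ (Q : MvPolynomial (Fin (m + 1)) ℝ), Q.totalDegree ≤ d →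
      ∀ (x : Fin (m + 1) → ℝ) (r R : ℝ), 0 < r → r ≤ R →
        qnorm Q {y | rho α (x - y) ≤ R} ≤
            C * (R / r) ^ (d * α (Fin.last m)) * qnorm Q {y | rho α (x - y) ≤ r} ∧
        qnorm Q {y | rho α (x - y) ≤ r} ≤
            C * (r / R) ^ (α 0) * qnorm Q {y | rho α (x - y) ≤ R} := by
  classical
  open Aux Aux2 Aux3 Aux4 Aux5 Aux6 Aux7 in
  by_cases hK : (Aux2.Kset (m+1) d).Nonempty
  case neg =>
    refine ⟨1, one_pos, ?_⟩
    intro Q hQ x r R hr hrR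
    haveI : IsEmpty ↥(Aux2.Kset (m+1) d) := by
      rw [Finset.not_nonempty_iff_eq_empty] at hK
      rw [hK]
      exact Finset.instIsEmpty
    have hT0 : Aux2.toPoly (Aux3.coeffVec d Q) = 0 := by
      unfold Aux2.toPoly
      rw [Finset.univ_eq_empty, Finset.sum_empty]
    have hQC : Q = MvPolynomial.C (MvPolynomial.coeff 0 Q) := by
      have := Aux3.decomp (d := d) hQ
      rwa [hT0, add_zero] at this
    rw [hQC, Aux3.qnorm_C, Aux3.qnorm_C]
    constructor <;> simp
  case pos =>
  obtain ⟨c2, hc2, hc2le⟩ := Aux5.exists_c2 (d := d) hα hK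
  haveI : Nonempty ↥(Aux2.Kset (m+1) d) := ⟨⟨hK.choose, hK.choose_spec⟩⟩
  set C1 : ℝ := 2 * (Fintype.card ↥(Aux2.Kset (m+1) d)) with hC1
  have hcard : 0 < (Fintype.card ↥(Aux2.Kset (m+1) d) : ℝ) := by
    have := Fintype.card_pos (α := ↥(Aux2.Kset (m+1) d))
    exact_mod_cast this
  have hC1pos : 0 < C1 := by rw [hC1]; positivity
  set Cc : ℝ := C1 / c2 with hCcdef
  have hCcpos : 0 < Cc := by rw [hCcdef]; positivity
  have hCc : C1 = Cc * c2 := (div_mul_cancel₀ C1 hc2.ne').symm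
  refine ⟨Cc, hCcpos, ?_⟩
  intro Q hQ x r R hr0 hrR
  have hR0 : 0 < R := lt_of_lt_of_le hr0 hrR
  set t := r / R with htdef
  have ht0 : 0 < t := by rw [htdef]; positivity
  have ht1 : t ≤ 1 := by rw [htdef]; exact (div_le_one hR0).2 hrR
  set S1 := {z : Fin (m+1) → ℝ | rho α z ≤ 1} with hS1
  set g : Fin (m+1) → MvPolynomial (Fin (m+1)) ℝ :=
    fun i => MvPolynomial.C (x i) + MvPolynomial.C (-(R ^ α i)) * MvPolynomial.X i with hg
  set P := MvPolynomial.bind₁ g Q with hP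
  have hgdeg : ∀ i, (g i).totalDegree ≤ 1 := by
    intro i
    rw [hg]
    refine (MvPolynomial.totalDegree_add _ _).trans ?_
    rw [MvPolynomial.totalDegree_C]
    refine max_le (Nat.zero_le _) ?_
    refine (MvPolynomial.totalDegree_mul _ _).trans ?_
    rw [MvPolynomial.totalDegree_C, MvPolynomial.totalDegree_X, Nat.zero_add]
  have hPdeg : P.totalDegree ≤ d := (Aux6.totalDegree_bind₁_le g hgdeg Q).trans hQ
  have hev : ∀ z, MvPolynomial.eval z P = MvPolynomial.eval (x - dil α R z) Q := by
    intro z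
    rw [hP, Aux6.eval_bind₁']
    have harg : (fun i => MvPolynomial.eval z (g i)) = x - dil α R z := by
      funext i
      rw [hg]
      simp only [map_add, map_mul, MvPolynomial.eval_C, MvPolynomial.eval_X, Pi.sub_apply]
      rw [dil]
      ring
    rw [harg]
  have hballR : {y | rho α (x - y) ≤ R} = (fun z => x - dil α R z) '' S1 := by
    have h := Aux.ballx_eq_image hα x hR0 one_pos (s := R)
    rwa [mul_one] at h
  have hballr : {y | rho α (x - y) ≤ r} = (fun z => x - dil α R z) '' {z | rho α z ≤ t} := by
    have h := Aux.ballx_eq_image hα x hR0 ht0 (s := R)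
    rwa [show R * t = r by rw [htdef]; field_simp] at h
  set MB := 2 * ∑ k ∈ P.support, |MvPolynomial.coeff k P| with hMB
  have hMB0 : 0 ≤ MB := by
    rw [hMB]
    have : 0 ≤ ∑ k ∈ P.support, |MvPolynomial.coeff k P| :=
      Finset.sum_nonneg fun k _ => abs_nonneg _
    linarith
  have hpair := Aux3.pair_bound hα P
  have hsub : {z : Fin (m+1) → ℝ | rho α z ≤ t} ⊆ S1 := by
    intro z hz
    exact le_trans hz ht1
  have hqR : qnorm Q {y | rho α (x - y) ≤ R} = qnorm P S1 := by
    rw [hballR]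
    exact Aux.qnorm_image (fun z _ => (hev z).symm) hMB0 hpair
  have hqr : qnorm Q {y | rho α (x - y) ≤ r} = qnorm P {z | rho α z ≤ t} := by
    rw [hballr]
    refine Aux.qnorm_image (fun z _ => (hev z).symm) hMB0 ?_
    intro a ha b hb
    exact hpair a (hsub ha) b (hsub hb)
  set cv := Aux3.coeffVec d P with hcv
  have hdec := Aux3.decomp (d := d) hPdeg
  have hcongr : ∀ (I : Set (Fin (m+1) → ℝ)), qnorm P I = qnorm (Aux2.toPoly cv) I := by
    intro I
    refine Aux.qnorm_congr I fun a b => ?_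
    conv_lhs => rw [hdec]
    simp only [map_add, MvPolynomial.eval_C]
    ring
  have hdil : {z : Fin (m+1) → ℝ | rho α z ≤ t} = dil α t '' S1 :=
    Aux.ball0_eq_dil_image hα ht0
  have hqdil : qnorm (Aux2.toPoly cv) (dil α t '' S1) =
      qnorm (Aux2.toPoly (Aux3.sig α d t cv)) S1 := by
    refine Aux.qnorm_image (fun z _ => Aux3.eval_dil_toPoly t cv z)
      (M := 2 * ∑ k : ↥(Aux2.Kset (m+1) d), |Aux3.sig α d t cv k|) ?_
      (Aux5.pairBound_toPoly hα (Aux3.sig α d t cv))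
    have := Aux5.sumAbs_nonneg (Aux3.sig α d t cv)
    linarith
  -- abbreviations
  have hA1 : qnorm P S1 ≤ C1 * ‖cv‖ := by
    rw [hcongr]
    exact Aux5.f_le_norm hα cv
  have hB1 : qnorm P {z | rho α z ≤ t} ≤ C1 * ‖Aux3.sig α d t cv‖ := by
    rw [hcongr, hdil, hqdil]
    exact Aux5.f_le_norm hα _
  have hA2 : c2 * ‖Aux3.sig α d t cv‖ ≤ qnorm P {z | rho α z ≤ t} := by
    rw [hcongr, hdil, hqdil]
    exact hc2le _
  have hB2 : c2 * ‖cv‖ ≤ qnorm P S1 := by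
    rw [hcongr]
    exact hc2le _
  have hsig_le : ‖Aux3.sig α d t cv‖ ≤ t ^ (α 0) * ‖cv‖ :=
    Aux5.norm_sig_le (Aux7.wlow hα hmono) ht0 ht1 cv
  have hle_sig : ‖cv‖ ≤ (t⁻¹) ^ (d * α (Fin.last m)) * ‖Aux3.sig α d t cv‖ :=
    Aux5.norm_le_sig (Aux7.whigh hmono) ht0 ht1 cv
  have hRr : R / r = t⁻¹ := by
    rw [htdef, inv_div]
  constructor
  · -- big ball controlled by small ball
    rw [hqR, hqr, hRr]
    set D := d * α (Fin.last m)
    have htD : (0:ℝ) ≤ (t⁻¹) ^ D := by positivity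
    calc qnorm P S1 ≤ C1 * ‖cv‖ := hA1
      _ ≤ C1 * ((t⁻¹) ^ D * ‖Aux3.sig α d t cv‖) :=
          mul_le_mul_of_nonneg_left hle_sig hC1pos.le
      _ = (Cc * (t⁻¹) ^ D) * (c2 * ‖Aux3.sig α d t cv‖) := by rw [hCc]; ring
      _ ≤ (Cc * (t⁻¹) ^ D) * qnorm P {z | rho α z ≤ t} :=
          mul_le_mul_of_nonneg_left hA2 (mul_nonneg hCcpos.le htD)
      _ = Cc * (t⁻¹) ^ D * qnorm P {z | rho α z ≤ t} := by ring
  · -- small ball controlled by big ball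
    rw [hqR, hqr]
    have htA : (0:ℝ) ≤ t ^ (α 0) := by positivity
    calc qnorm P {z | rho α z ≤ t} ≤ C1 * ‖Aux3.sig α d t cv‖ := hB1
      _ ≤ C1 * (t ^ (α 0) * ‖cv‖) := mul_le_mul_of_nonneg_left hsig_le hC1pos.le
      _ = (Cc * t ^ (α 0)) * (c2 * ‖cv‖) := by rw [hCc]; ring
      _ ≤ (Cc * t ^ (α 0)) * qnorm P S1 :=
          mul_le_mul_of_nonneg_left hB2 (mul_nonneg hCcpos.le htA)
      _ = Cc * t ^ (α 0) * qnorm P S1 := by ring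

end
end

section
/- There exists D₀ ∈ ℕ depending only on α, d and 𝐝 such that for every power of two D ≥ D₀, every anisotropic D-adic cube I ∈ 𝒟_s with s < 0, and every real polynomial Q on ℝ^𝐝 of degree at most d: ‖Q‖_{Î} ≥ 10⁴ ‖Q‖_I, where Î is the unique D-adic cube of scale s+1 containing I. -/
open MeasureTheory Set
open scoped ENNReal NNReal BigOperators

noncomputable section

/-- An anisotropic `D`-adic cube, given by its scale `s` and position `k`. -/
structure DCube (dd : ℕ) where
  s : ℤ
  k : Fin dd → ℤ

/-- The cube `x + δ_{D^s}([0,1)^dd)` with `x = δ_{D^s}(k)`, as a subset of `ℝ^dd`. -/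
def DCube.toSet {dd : ℕ} (α : Fin dd → ℕ) (D : ℕ) (J : DCube dd) : Set (Fin dd → ℝ) :=
  {x | ∀ i, (D : ℝ) ^ (J.s * (α i : ℤ)) * J.k i ≤ x i ∧
            x i < (D : ℝ) ^ (J.s * (α i : ℤ)) * (J.k i + 1)}

/-- Membership in the grid `𝒟`: nonpositive scale and base point in `[0,1)^dd`. -/
def DCube.valid {dd : ℕ} (α : Fin dd → ℕ) (D : ℕ) (J : DCube dd) : Prop :=
  J.s ≤ 0 ∧ ∀ i, 0 ≤ J.k i ∧ (D : ℝ) ^ (J.s * (α i : ℤ)) * J.k i < 1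

namespace Statement7Aux
open MvPolynomial Finset

open MvPolynomial

def osc {dd : ℕ} (f : (Fin dd → ℝ) → ℝ) (I : Set (Fin dd → ℝ)) : ℝ :=
  ⨆ x ∈ I, ⨆ y ∈ I, |f x - f y|

variable {dd : ℕ} {f g : (Fin dd → ℝ) → ℝ} {I : Set (Fin dd → ℝ)} {M B Bf Bg : ℝ}

lemma osc_nonneg : 0 ≤ osc f I :=
  Real.iSup_nonneg fun _ => Real.iSup_nonneg fun _ =>
    Real.iSup_nonneg fun _ => Real.iSup_nonneg fun _ => abs_nonneg _

lemma osc_le (hM : 0 ≤ M) (h : ∀ x ∈ I, ∀ y ∈ I, |f x - f y| ≤ M) : osc f I ≤ M :=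
  Real.iSup_le (fun x => Real.iSup_le (fun hx => Real.iSup_le (fun y =>
    Real.iSup_le (fun hy => h x hx y hy) hM) hM) hM) hM

lemma le_osc (hB : ∀ z ∈ I, |f z| ≤ B) {x y : Fin dd → ℝ} (hx : x ∈ I) (hy : y ∈ I) :
    |f x - f y| ≤ osc f I := by
  have hB0 : 0 ≤ B := (abs_nonneg _).trans (hB x hx)
  have step1 : ∀ x' ∈ I, ∀ y' ∈ I, |f x' - f y'| ≤ 2 * B := fun x' hx' y' hy' =>
    (abs_sub _ _).trans (by have := hB x' hx'; have := hB y' hy'; linarith)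
  have h1 : |f x - f y| ≤ ⨆ y' ∈ I, |f x - f y'| := by
    have : |f x - f y| = ⨆ _ : y ∈ I, |f x - f y| := (ciSup_pos (f := fun _ => |f x - f y|) hy).symm
    rw [this]
    apply le_ciSup (f := fun y' => ⨆ _ : y' ∈ I, |f x - f y'|)
    refine ⟨2 * B, ?_⟩
    rintro v ⟨y', rfl⟩
    by_cases hy' : y' ∈ I
    · simp only []; rw [ciSup_pos (f := fun _ => |f x - f y'|) hy']; exact step1 x hx y' hy'
    · simp [hy']; positivity
  refine h1.trans ?_
  have h2 : (⨆ y' ∈ I, |f x - f y'|) = ⨆ _ : x ∈ I, ⨆ y' ∈ I, |f x - f y'| := (ciSup_pos (f := fun _ => ⨆ y' ∈ I, |f x - f y'|) hx).symm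
  rw [h2]
  apply le_ciSup (f := fun x' => ⨆ _ : x' ∈ I, ⨆ y' ∈ I, |f x' - f y'|)
  refine ⟨2 * B, ?_⟩
  rintro v ⟨x', rfl⟩
  by_cases hx' : x' ∈ I
  · simp only []; rw [ciSup_pos (f := fun _ => ⨆ y' ∈ I, |f x' - f y'|) hx']
    exact Real.iSup_le (fun y' => Real.iSup_le (fun hy' => step1 x' hx' y' hy') (by positivity))
      (by positivity)
  · simp [hx']; positivity

lemma osc_congr (h : ∀ x ∈ I, ∀ y ∈ I, f x - f y = g x - g y) : osc f I = osc g I := by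
  unfold osc
  refine iSup_congr fun x => ?_
  refine iSup_congr fun hx => ?_
  refine iSup_congr fun y => ?_
  refine iSup_congr fun hy => ?_
  rw [h x hx y hy]

lemma osc_add_le (hf : ∀ z ∈ I, |f z| ≤ Bf) (hg : ∀ z ∈ I, |g z| ≤ Bg) :
    osc (fun x => f x + g x) I ≤ osc f I + osc g I := by
  refine osc_le (by have := osc_nonneg (f := f) (I := I); have := osc_nonneg (f := g) (I := I); linarith) ?_
  intro x hx y hy
  have : f x + g x - (f y + g y) = (f x - f y) + (g x - g y) := by ring
  rw [this]
  exact (abs_add_le _ _).trans (add_le_add (le_osc hf hx hy) (le_osc hg hx hy))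

lemma osc_mul (t : ℝ) (hB : ∀ z ∈ I, |f z| ≤ B) :
    osc (fun x => t * f x) I = |t| * osc f I := by
  rcases eq_or_ne t 0 with rfl | ht
  · simp only [zero_mul, abs_zero]
    refine le_antisymm (osc_le le_rfl ?_) osc_nonneg
    intro x hx y hy; simp
  · refine le_antisymm (osc_le (mul_nonneg (abs_nonneg t) osc_nonneg) ?_) ?_
    · intro x hx y hy
      have : t * f x - t * f y = t * (f x - f y) := by ring
      rw [this, abs_mul]
      exact mul_le_mul_of_nonneg_left (le_osc hB hx hy) (abs_nonneg t)
    · have h2 : osc f I ≤ |t|⁻¹ * osc (fun x => t * f x) I := by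
        refine osc_le (mul_nonneg (by positivity) osc_nonneg) ?_
        intro x hx y hy
        have hb2 : ∀ z ∈ I, |t * f z| ≤ |t| * B := fun z hz => by
          rw [abs_mul]; exact mul_le_mul_of_nonneg_left (hB z hz) (abs_nonneg t)
        have := le_osc hb2 hx hy
        have habs : |f x - f y| = |t|⁻¹ * |t * f x - t * f y| := by
          rw [show t * f x - t * f y = t * (f x - f y) by ring, abs_mul]
          field_simp
        rw [habs]
        exact mul_le_mul_of_nonneg_left this (inv_nonneg.2 (abs_nonneg t))
      have ht' : (0:ℝ) < |t| := abs_pos.2 ht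
      calc |t| * osc f I ≤ |t| * (|t|⁻¹ * osc (fun x => t * f x) I) :=
            mul_le_mul_of_nonneg_left h2 (abs_nonneg t)
        _ = osc (fun x => t * f x) I := by field_simp


open MvPolynomial Finset

lemma abs_pow_sub_pow (a b : ℝ) (ha : |a| ≤ 1) (hb : |b| ≤ 1) (k : ℕ) :
    |a ^ k - b ^ k| ≤ k * |a - b| := by
  induction k with
  | zero => simp
  | succ n ih =>
    have key : a ^ (n+1) - b ^ (n+1) = a * (a ^ n - b ^ n) + (a - b) * b ^ n := by ring
    rw [key]
    have h1 : |a * (a ^ n - b ^ n)| ≤ n * |a - b| := by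
      rw [abs_mul]
      calc |a| * |a ^ n - b ^ n| ≤ 1 * (n * |a - b|) :=
            mul_le_mul ha ih (abs_nonneg _) zero_le_one
        _ = n * |a - b| := one_mul _
    have h2 : |(a - b) * b ^ n| ≤ |a - b| := by
      rw [abs_mul, abs_pow]
      calc |a - b| * |b| ^ n ≤ |a - b| * 1 ^ n :=
            mul_le_mul_of_nonneg_left (pow_le_pow_left₀ (abs_nonneg b) hb n) (abs_nonneg _)
        _ = |a - b| := by simp
    calc |a * (a ^ n - b ^ n) + (a - b) * b ^ n| ≤ |a * (a ^ n - b ^ n)| + |(a - b) * b ^ n| :=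
          abs_add_le _ _
      _ ≤ n * |a - b| + |a - b| := add_le_add h1 h2
      _ = (n + 1 : ℕ) * |a - b| := by push_cast; ring

lemma abs_prod_sub_prod {ι : Type*} (s : Finset ι) (u v : ι → ℝ)
    (hu : ∀ i ∈ s, |u i| ≤ 1) (hv : ∀ i ∈ s, |v i| ≤ 1) :
    |∏ i ∈ s, u i - ∏ i ∈ s, v i| ≤ ∑ i ∈ s, |u i - v i| := by
  classical
  induction s using Finset.induction with
  | empty => simp
  | @insert a s ha ih =>
    rw [Finset.prod_insert ha, Finset.prod_insert ha, Finset.sum_insert ha]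
    have hu' : ∀ i ∈ s, |u i| ≤ 1 := fun i hi => hu i (Finset.mem_insert_of_mem hi)
    have hv' : ∀ i ∈ s, |v i| ≤ 1 := fun i hi => hv i (Finset.mem_insert_of_mem hi)
    have hua : |u a| ≤ 1 := hu a (Finset.mem_insert_self a s)
    have key : u a * ∏ i ∈ s, u i - v a * ∏ i ∈ s, v i
        = u a * (∏ i ∈ s, u i - ∏ i ∈ s, v i) + (u a - v a) * ∏ i ∈ s, v i := by ring
    rw [key]
    have hpv : |∏ i ∈ s, v i| ≤ 1 := by
      rw [Finset.abs_prod]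
      exact Finset.prod_le_one (fun i hi => abs_nonneg _) hv'
    calc |u a * (∏ i ∈ s, u i - ∏ i ∈ s, v i) + (u a - v a) * ∏ i ∈ s, v i|
        ≤ |u a| * |∏ i ∈ s, u i - ∏ i ∈ s, v i| + |u a - v a| * |∏ i ∈ s, v i| := by
          rw [← abs_mul, ← abs_mul]; exact abs_add_le _ _
      _ ≤ 1 * (∑ i ∈ s, |u i - v i|) + |u a - v a| * 1 := by
          gcongr
          · exact ih hu' hv'
      _ = |u a - v a| + ∑ i ∈ s, |u i - v i| := by ring

lemma mono_diff_le {dd : ℕ} (m : Fin dd → ℕ) (x y : Fin dd → ℝ) (δ : ℝ)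
    (hx : ∀ i, |x i| ≤ 1) (hy : ∀ i, |y i| ≤ 1) (hδ : ∀ i, |x i - y i| ≤ δ) :
    |∏ i, x i ^ m i - ∏ i, y i ^ m i| ≤ (∑ i, (m i : ℝ)) * δ := by
  have h1 : |∏ i, x i ^ m i - ∏ i, y i ^ m i| ≤ ∑ i, |x i ^ m i - y i ^ m i| :=
    abs_prod_sub_prod Finset.univ _ _
      (fun i _ => by rw [abs_pow]; exact pow_le_one₀ (abs_nonneg _) (hx i))
      (fun i _ => by rw [abs_pow]; exact pow_le_one₀ (abs_nonneg _) (hy i))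
  refine h1.trans ?_
  rw [Finset.sum_mul]
  refine Finset.sum_le_sum fun i _ => ?_
  calc |x i ^ m i - y i ^ m i| ≤ m i * |x i - y i| := abs_pow_sub_pow _ _ (hx i) (hy i) _
    _ ≤ m i * δ := mul_le_mul_of_nonneg_left (hδ i) (by positivity)


variable {dd d : ℕ}

open MvPolynomial Finset

variable {dd d : ℕ}

def cube0 (dd : ℕ) : Set (Fin dd → ℝ) := {x | ∀ i, 0 ≤ x i ∧ x i < 1}

def expF {dd d : ℕ} (m : Fin dd → Fin (d + 1)) : Fin dd →₀ ℕ :=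
  Finsupp.equivFunOnFinite.symm fun i => (m i : ℕ)

lemma expF_apply (m : Fin dd → Fin (d + 1)) (i : Fin dd) : expF m i = (m i : ℕ) := rfl

lemma expF_inj : Function.Injective (expF (dd := dd) (d := d)) := by
  intro m₁ m₂ h
  funext i
  have : (m₁ i : ℕ) = (m₂ i : ℕ) := by
    have := congrArg (fun f => f i) h
    simpa [expF_apply] using this
  exact Fin.val_injective this

lemma expF_ne_zero {m : Fin dd → Fin (d + 1)} (hm : m ≠ 0) : expF m ≠ 0 := by
  intro h
  apply hm
  funext i
  have : expF m i = 0 := by rw [h]; rfl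
  rw [expF_apply] at this
  exact Fin.val_injective this

def Pfun (dd d : ℕ) (c : {m : Fin dd → Fin (d + 1) // m ≠ 0} → ℝ) (x : Fin dd → ℝ) : ℝ :=
  ∑ m : {m : Fin dd → Fin (d + 1) // m ≠ 0}, c m * ∏ i, x i ^ ((m : Fin dd → Fin (d+1)) i : ℕ)

lemma Pfun_smul (c : {m : Fin dd → Fin (d + 1) // m ≠ 0} → ℝ) (t : ℝ) (x : Fin dd → ℝ) :
    Pfun dd d (t • c) x = t * Pfun dd d c x := by
  unfold Pfun
  rw [Finset.mul_sum]
  refine Finset.sum_congr rfl fun m _ => ?_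
  simp [mul_assoc]

lemma Pfun_add (c c' : {m : Fin dd → Fin (d + 1) // m ≠ 0} → ℝ) (x : Fin dd → ℝ) :
    Pfun dd d (c + c') x = Pfun dd d c x + Pfun dd d c' x := by
  unfold Pfun
  rw [← Finset.sum_add_distrib]
  refine Finset.sum_congr rfl fun m _ => ?_
  simp [add_mul]

lemma Pfun_bound (c : {m : Fin dd → Fin (d + 1) // m ≠ 0} → ℝ) (x : Fin dd → ℝ)
    (hx : x ∈ cube0 dd) : |Pfun dd d c x| ≤ ∑ m, |c m| := by
  refine (Finset.abs_sum_le_sum_abs _ _).trans ?_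
  refine Finset.sum_le_sum fun m _ => ?_
  rw [abs_mul]
  have : |∏ i, x i ^ ((m : Fin dd → Fin (d+1)) i : ℕ)| ≤ 1 := by
    rw [Finset.abs_prod]
    refine Finset.prod_le_one (fun i _ => abs_nonneg _) fun i _ => ?_
    rw [abs_pow]
    exact pow_le_one₀ (abs_nonneg _) (abs_le.2 ⟨by linarith [(hx i).1], le_of_lt (hx i).2⟩)
  calc |c m| * |∏ i, x i ^ ((m : Fin dd → Fin (d+1)) i : ℕ)| ≤ |c m| * 1 :=
        mul_le_mul_of_nonneg_left this (abs_nonneg _)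
    _ = |c m| := mul_one _

/-- polynomial eval is analytic -/
lemma analyticAt_eval (p : MvPolynomial (Fin dd) ℝ) (x : Fin dd → ℝ) :
    AnalyticAt ℝ (fun z => MvPolynomial.eval z p) x := by
  induction p using MvPolynomial.induction_on with
  | C a =>
    simp only [eval_C]
    exact analyticAt_const
  | add p q hp hq => simp only [eval_add]; exact hp.add hq
  | mul_X p n hp =>
    have hproj : AnalyticAt ℝ (fun z : Fin dd → ℝ => z n) x :=
      (ContinuousLinearMap.proj (R := ℝ) (φ := fun _ : Fin dd => ℝ) n).analyticAt x
    simp only [eval_mul, eval_X]; exact hp.mul hproj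

/-- Vanishing on the cube implies zero coefficients. -/
lemma Pfun_zero_of_vanish (c : {m : Fin dd → Fin (d + 1) // m ≠ 0} → ℝ)
    (h : ∀ x ∈ cube0 dd, Pfun dd d c x = 0) : c = 0 := by
  classical
  set Qc : MvPolynomial (Fin dd) ℝ :=
    ∑ m : {m : Fin dd → Fin (d + 1) // m ≠ 0}, monomial (expF (m : Fin dd → Fin (d+1))) (c m)
    with hQc
  have hev : ∀ x, MvPolynomial.eval x Qc = Pfun dd d c x := by
    intro x
    rw [hQc, map_sum]
    refine Finset.sum_congr rfl fun m _ => ?_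
    rw [eval_monomial]
    congr 1
    rw [Finsupp.prod]
    rw [Finset.prod_subset (Finset.subset_univ (expF (m : Fin dd → Fin (d+1))).support)]
    · exact Finset.prod_congr rfl fun i _ => by rw [expF_apply]
    · intro i _ hi
      rw [Finsupp.notMem_support_iff.1 hi, pow_zero]
  -- Qc vanishes everywhere
  have hvan : ∀ x, MvPolynomial.eval x Qc = 0 := by
    have hana : AnalyticOnNhd ℝ (fun z => MvPolynomial.eval z Qc) Set.univ :=
      fun z _ => analyticAt_eval Qc z
    have x₀ : (Fin dd → ℝ) := fun _ => 1/2
    have hU : IsOpen {x : Fin dd → ℝ | ∀ i, x i ∈ Set.Ioo (0:ℝ) 1} := by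
      have : {x : Fin dd → ℝ | ∀ i, x i ∈ Set.Ioo (0:ℝ) 1}
          = Set.pi Set.univ (fun _ => Set.Ioo (0:ℝ) 1) := by
        ext x; simp [Set.mem_pi]
      rw [this]
      exact isOpen_set_pi Set.finite_univ fun i _ => isOpen_Ioo
    have hx₀ : (fun _ => 1/2 : Fin dd → ℝ) ∈ {x : Fin dd → ℝ | ∀ i, x i ∈ Set.Ioo (0:ℝ) 1} := by
      intro i; constructor <;> norm_num
    have hev0 : (fun z => MvPolynomial.eval z Qc) =ᶠ[nhds (fun _ => 1/2 : Fin dd → ℝ)] 0 := by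
      refine Filter.eventuallyEq_of_mem (hU.mem_nhds hx₀) ?_
      intro z hz
      have hzc : z ∈ cube0 dd := fun i => ⟨le_of_lt (hz i).1, (hz i).2⟩
      simp only [Pi.zero_apply]
      rw [hev z]
      exact h z hzc
    have := hana.eqOn_zero_of_preconnected_of_eventuallyEq_zero isPreconnected_univ
      (Set.mem_univ _) hev0
    intro x
    exact this (Set.mem_univ x)
  have hQc0 : Qc = 0 := MvPolynomial.funext (fun x => by rw [hvan x, map_zero])
  funext m₀
  have hco : MvPolynomial.coeff (expF (m₀ : Fin dd → Fin (d+1))) Qc = c m₀ := by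
    rw [hQc, MvPolynomial.coeff_sum]
    rw [Finset.sum_eq_single m₀]
    · rw [coeff_monomial, if_pos rfl]
    · intro m _ hm
      rw [coeff_monomial, if_neg]
      intro hc
      exact hm (Subtype.ext (expF_inj hc))
    · intro hmem
      exact absurd (Finset.mem_univ m₀) hmem
  rw [hQc0] at hco
  simp only [MvPolynomial.coeff_zero] at hco
  exact (hco.symm : c m₀ = 0)


open MvPolynomial Finset
lemma osc_zero_fn {I : Set (Fin dd → ℝ)} : osc (fun _ => (0:ℝ)) I = 0 :=
  le_antisymm (osc_le le_rfl (by intro x _ y _; simp)) osc_nonneg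

lemma HL (dd d : ℕ) : ∃ C : ℝ, 0 < C ∧ ∀ c : {m : Fin dd → Fin (d + 1) // m ≠ 0} → ℝ,
    ∑ m, |c m| ≤ C * osc (Pfun dd d c) (cube0 dd) := by
  classical
  set ι' := {m : Fin dd → Fin (d + 1) // m ≠ 0}
  set G : (ι' → ℝ) → ℝ := fun c => osc (Pfun dd d c) (cube0 dd) with hG
  by_cases hne : Nonempty ι'
  case neg =>
    refine ⟨1, one_pos, fun c => ?_⟩
    have : (Finset.univ : Finset ι') = ∅ := by
      simpa using Finset.univ_eq_empty_iff.2 (not_nonempty_iff.1 hne)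
    rw [this]
    simpa using (osc_nonneg : (0:ℝ) ≤ osc (Pfun dd d c) (cube0 dd))
  -- Lipschitz-type bound
  have hlip : ∀ c c' : ι' → ℝ, G c ≤ G c' + 2 * ∑ m, |c m - c' m| := by
    intro c c'
    have hfe : Pfun dd d c = fun x => Pfun dd d c' x + Pfun dd d (c - c') x := by
      funext x
      rw [← Pfun_add]
      congr 1
      abel
    have h1 : G c ≤ G c' + osc (Pfun dd d (c - c')) (cube0 dd) := by
      rw [hG]
      simp only []
      rw [hfe]
      exact osc_add_le (Pfun_bound c') (Pfun_bound (c - c'))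
    refine h1.trans (add_le_add_right ?_ _)
    refine osc_le (by positivity) fun x hx y hy => ?_
    have bx := Pfun_bound (c - c') x hx
    have by' := Pfun_bound (c - c') y hy
    have : ∑ m, |(c - c') m| = ∑ m, |c m - c' m| := by
      refine Finset.sum_congr rfl fun m _ => ?_; simp
    rw [this] at bx by'
    calc |Pfun dd d (c - c') x - Pfun dd d (c - c') y|
        ≤ |Pfun dd d (c - c') x| + |Pfun dd d (c - c') y| := abs_sub _ _
      _ ≤ 2 * ∑ m, |c m - c' m| := by linarith
  have hcard : (0:ℝ) < (Fintype.card ι' : ℝ) := by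
    have := Fintype.card_pos_iff.2 hne
    exact_mod_cast this
  have hGcont : Continuous G := by
    have : LipschitzWith ⟨2 * Fintype.card ι', by positivity⟩ G := by
      refine LipschitzWith.of_dist_le_mul fun c c' => ?_
      have hsum : ∀ a b : ι' → ℝ, ∑ m, |a m - b m| ≤ (Fintype.card ι' : ℝ) * dist a b := by
        intro a b
        have : ∀ m, |a m - b m| ≤ dist a b := fun m => by
          rw [← Real.dist_eq]
          exact dist_le_pi_dist a b m
        calc ∑ m, |a m - b m| ≤ ∑ _m : ι', dist a b := Finset.sum_le_sum fun m _ => this m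
          _ = (Fintype.card ι' : ℝ) * dist a b := by
            rw [Finset.sum_const, Finset.card_univ, nsmul_eq_mul]
      have h1 := hlip c c'
      have h2 := hlip c' c
      have h2' : ∑ m, |c' m - c m| = ∑ m, |c m - c' m| := by
        refine Finset.sum_congr rfl fun m _ => abs_sub_comm _ _
      rw [h2'] at h2
      rw [Real.dist_eq]
      have habs : |G c - G c'| ≤ 2 * ∑ m, |c m - c' m| := abs_sub_le_iff.2 ⟨by linarith, by linarith⟩
      refine habs.trans ?_
      have := hsum c c'
      push_cast
      show 2 * ∑ m, |c m - c' m| ≤ (2 * (Fintype.card ι' : ℝ)) * dist c c'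
      nlinarith [dist_nonneg (x := c) (y := c')]
    exact this.continuous
  -- sphere
  have hsne : (Metric.sphere (0 : ι' → ℝ) 1).Nonempty := by
    exact NormedSpace.sphere_nonempty.2 zero_le_one
  obtain ⟨c₀, hc₀s, hmin⟩ := (isCompact_sphere (0 : ι' → ℝ) 1).exists_isMinOn hsne
    hGcont.continuousOn
  have hc₀norm : ‖c₀‖ = 1 := by simpa using hc₀s
  have hc₀ne : c₀ ≠ 0 := by
    intro h; rw [h] at hc₀norm; simp at hc₀norm
  have hε : 0 < G c₀ := by
    rcases lt_or_eq_of_le (osc_nonneg : (0:ℝ) ≤ G c₀) with h | h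
    · exact h
    exfalso
    apply hc₀ne
    refine Pfun_zero_of_vanish c₀ fun x hx => ?_
    have h0mem : (fun _ => (0:ℝ)) ∈ cube0 dd := fun i => by norm_num
    have hP0 : Pfun dd d c₀ (fun _ => (0:ℝ)) = 0 := by
      unfold Pfun
      refine Finset.sum_eq_zero fun m _ => ?_
      have : ∃ i, ((m : Fin dd → Fin (d+1)) i : ℕ) ≠ 0 := by
        by_contra hc
        push_neg at hc
        exact m.2 (funext fun i => Fin.val_injective (hc i))
      obtain ⟨i, hi⟩ := this
      have : ∏ i, (0:ℝ) ^ ((m : Fin dd → Fin (d+1)) i : ℕ) = 0 :=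
        Finset.prod_eq_zero (Finset.mem_univ i) (zero_pow hi)
      rw [this, mul_zero]
    have hconst : Pfun dd d c₀ x = Pfun dd d c₀ (fun _ => (0:ℝ)) := by
      have := le_osc (Pfun_bound c₀) hx h0mem
      rw [← h] at this
      have h2 := abs_nonneg (Pfun dd d c₀ x - Pfun dd d c₀ (fun _ => (0:ℝ)))
      have : |Pfun dd d c₀ x - Pfun dd d c₀ (fun _ => (0:ℝ))| = 0 := le_antisymm this h2
      linarith [abs_eq_zero.1 this, sub_eq_zero.1 (abs_eq_zero.1 this)]
    rw [hconst, hP0]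
  refine ⟨(Fintype.card ι' : ℝ) / G c₀, by positivity, fun c => ?_⟩
  rcases eq_or_ne c 0 with rfl | hc
  · have : Pfun dd d (0 : ι' → ℝ) = fun _ => (0:ℝ) := by
      funext x
      unfold Pfun
      exact Finset.sum_eq_zero fun m _ => by simp
    rw [hG]
    simp only []
    rw [this, osc_zero_fn]
    simp
  · set u := ‖c‖⁻¹ • c with hu
    have hcn : (0:ℝ) < ‖c‖ := norm_pos_iff.2 hc
    have hun : ‖u‖ = 1 := norm_smul_inv_norm hc
    have hus : u ∈ Metric.sphere (0 : ι' → ℝ) 1 := by simp [hun]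
    have hmin' : G c₀ ≤ G u := hmin hus
    have hGc : G c = ‖c‖ * G u := by
      have hcu : c = ‖c‖ • u := by
        rw [hu, smul_smul, mul_inv_cancel₀ (ne_of_gt hcn), one_smul]
      have : Pfun dd d c = fun x => ‖c‖ * Pfun dd d u x := by
        funext x
        conv_lhs => rw [hcu]
        rw [Pfun_smul]
      rw [hG]; simp only []
      rw [this, osc_mul ‖c‖ (Pfun_bound u), abs_of_pos hcn]
    have hsum : ∑ m, |c m| ≤ (Fintype.card ι' : ℝ) * ‖c‖ := by
      calc ∑ m, |c m| ≤ ∑ _m : ι', ‖c‖ := Finset.sum_le_sum fun m _ => by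
            rw [← Real.norm_eq_abs]; exact norm_le_pi_norm c m
        _ = (Fintype.card ι' : ℝ) * ‖c‖ := by
            rw [Finset.sum_const, Finset.card_univ, nsmul_eq_mul]
    refine hsum.trans ?_
    rw [show osc (Pfun dd d c) (cube0 dd) = G c from rfl, hGc]
    rw [div_mul_eq_mul_div, le_div_iff₀ hε]
    calc (Fintype.card ι' : ℝ) * ‖c‖ * G c₀ ≤ (Fintype.card ι' : ℝ) * ‖c‖ * G u := by
          have : (0:ℝ) ≤ (Fintype.card ι' : ℝ) * ‖c‖ := by positivity
          exact mul_le_mul_of_nonneg_left hmin' this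
      _ = (Fintype.card ι' : ℝ) * (‖c‖ * G u) := by ring

open MvPolynomial Finset

lemma coord_le_sum (ν : Fin dd →₀ ℕ) (i : Fin dd) : ν i ≤ ν.sum fun _ e => e := by
  rcases Nat.eq_zero_or_pos (ν i) with h | h
  · simp [h]
  · have hi : i ∈ ν.support := Finsupp.mem_support_iff.2 (Nat.pos_of_ne_zero ?_).ne'
    exact Finset.single_le_sum (f := fun a => ν a) (fun a _ => Nat.zero_le _) hi
    exact h.ne'

/-- Every coefficient index of a polynomial of total degree ≤ d has all entries ≤ d. -/
lemma coeff_exp_le {R : MvPolynomial (Fin dd) ℝ} (hdeg : R.totalDegree ≤ d)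
    {ν : Fin dd →₀ ℕ} (hν : ν ∈ R.support) (i : Fin dd) : ν i ≤ d :=
  (coord_le_sum ν i).trans ((MvPolynomial.le_totalDegree hν).trans hdeg)

/-- Key identity: eval in terms of `Pfun` of the coefficient vector. -/
lemma eval_eq_Pfun (R : MvPolynomial (Fin dd) ℝ) (hdeg : R.totalDegree ≤ d) (x : Fin dd → ℝ) :
    MvPolynomial.eval x R = MvPolynomial.coeff 0 R
      + Pfun dd d (fun m => MvPolynomial.coeff (expF (m : Fin dd → Fin (d+1))) R) x := by
  classical
  set g : (Fin dd →₀ ℕ) → ℝ := fun ν => MvPolynomial.coeff ν R * ∏ i, x i ^ ν i with hg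
  have h1 : MvPolynomial.eval x R = ∑ ν ∈ R.support, g ν := MvPolynomial.eval_eq' x R
  set T : Finset (Fin dd →₀ ℕ) :=
    Finset.image (fun m : {m : Fin dd → Fin (d + 1) // m ≠ 0} => expF (m : Fin dd → Fin (d+1)))
      Finset.univ with hT
  have hinj : Function.Injective
      (fun m : {m : Fin dd → Fin (d + 1) // m ≠ 0} => expF (d := d) m.val) := by
    intro m₁ m₂ h
    refine Subtype.ext (funext fun i => Fin.val_injective ?_)
    have := congrArg (fun f => f i) h
    simpa [expF_apply] using this
  have h2 : Pfun dd d (fun m => MvPolynomial.coeff (expF (m : Fin dd → Fin (d+1))) R) x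
      = ∑ ν ∈ T, g ν := by
    rw [hT, Finset.sum_image (fun m₁ _ m₂ _ h => hinj h)]
    rfl
  have hTmem : ∀ ν ∈ T, ν ≠ 0 := by
    intro ν hν
    rw [hT, Finset.mem_image] at hν
    obtain ⟨m, _, rfl⟩ := hν
    intro h0
    apply m.2
    funext i
    have : expF (m : Fin dd → Fin (d+1)) i = 0 := by rw [h0]; rfl
    rw [expF_apply] at this
    exact Fin.val_injective this
  have hsub : R.support.erase 0 ⊆ T := by
    intro ν hν
    have hν' : ν ∈ R.support := Finset.mem_of_mem_erase hν
    have hne : ν ≠ 0 := Finset.ne_of_mem_erase hν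
    rw [hT, Finset.mem_image]
    have hle : ∀ i, ν i ≤ d := coeff_exp_le hdeg hν'
    refine ⟨⟨fun i => ⟨ν i, Nat.lt_succ_of_le (hle i)⟩, ?_⟩, Finset.mem_univ _, ?_⟩
    · intro h0
      apply hne
      ext i
      have := congrArg (fun f => (f i : ℕ)) h0
      simpa using this
    · ext i
      rw [expF_apply]
  have h3 : ∑ ν ∈ T, g ν = ∑ ν ∈ R.support.erase 0, g ν := by
    refine (Finset.sum_subset hsub ?_).symm
    intro ν hν hnotin
    have hne : ν ≠ 0 := hTmem ν hν
    have : ν ∉ R.support := fun hmem => hnotin (Finset.mem_erase.2 ⟨hne, hmem⟩)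
    rw [hg]
    simp [MvPolynomial.notMem_support_iff.1 this]
  rw [h1, h2, h3]
  by_cases h0 : (0 : Fin dd →₀ ℕ) ∈ R.support
  · rw [← Finset.sum_erase_add R.support g h0]
    have : g 0 = MvPolynomial.coeff 0 R := by rw [hg]; simp
    rw [this]; ring
  · rw [Finset.erase_eq_of_notMem h0]
    rw [MvPolynomial.notMem_support_iff.1 h0]
    ring

/-- coefficients at too-large exponents vanish -/
lemma coeff_expF_eq_zero {R : MvPolynomial (Fin dd) ℝ} (hdeg : R.totalDegree ≤ d)
    {m : Fin dd → Fin (d + 1)} (hm : d < ∑ i, ((m i : ℕ))) :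
    MvPolynomial.coeff (expF m) R = 0 := by
  by_contra h
  have hmem : expF (d := d) m ∈ R.support := MvPolynomial.mem_support_iff.2 h
  have hsum : ((expF (d := d) m).sum fun _ e => e) ≤ d :=
    (MvPolynomial.le_totalDegree hmem).trans hdeg
  have : ((expF (d := d) m).sum fun _ e => e) = ∑ i, ((m i : ℕ)) := by
    rw [Finsupp.sum_fintype]
    · exact Finset.sum_congr rfl fun i _ => by rw [expF_apply]
    · intro i; rfl
  omega

/-- bound for |eval| on a coordinate box -/
lemma eval_abs_le (p : MvPolynomial (Fin dd) ℝ) (hdeg : p.totalDegree ≤ d)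
    (cb : Fin dd → ℝ) (z : Fin dd → ℝ) (hz : ∀ i, |z i| ≤ cb i) :
    |MvPolynomial.eval z p| ≤
      ∑ ν ∈ p.support, |MvPolynomial.coeff ν p| * ∏ i, (max 1 (cb i)) ^ d := by
  rw [MvPolynomial.eval_eq' z p]
  refine (Finset.abs_sum_le_sum_abs _ _).trans (Finset.sum_le_sum fun ν hν => ?_)
  rw [abs_mul]
  refine mul_le_mul_of_nonneg_left ?_ (abs_nonneg _)
  rw [Finset.abs_prod]
  refine Finset.prod_le_prod (fun i _ => abs_nonneg _) fun i _ => ?_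
  rw [abs_pow]
  calc |z i| ^ ν i ≤ (max 1 (cb i)) ^ ν i :=
        pow_le_pow_left₀ (abs_nonneg _) ((hz i).trans (le_max_right _ _)) _
    _ ≤ (max 1 (cb i)) ^ d :=
        pow_le_pow_right₀ (le_max_left _ _) (coeff_exp_le hdeg hν i)

/-- total degree bound for substitution of affine polynomials -/
lemma totalDegree_bind₁_affine (a b : Fin dd → ℝ) (p : MvPolynomial (Fin dd) ℝ) :
    (MvPolynomial.bind₁ (fun i => MvPolynomial.C (a i) + MvPolynomial.C (b i) * MvPolynomial.X i) p).totalDegree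
      ≤ p.totalDegree := by
  classical
  set f : Fin dd → MvPolynomial (Fin dd) ℝ :=
    fun i => MvPolynomial.C (a i) + MvPolynomial.C (b i) * MvPolynomial.X i with hf
  have hfdeg : ∀ i, (f i).totalDegree ≤ 1 := by
    intro i
    refine (MvPolynomial.totalDegree_add _ _).trans ?_
    simp only [MvPolynomial.totalDegree_C, max_le_iff]
    constructor
    · exact Nat.zero_le _
    · refine (MvPolynomial.totalDegree_mul _ _).trans ?_
      simp [MvPolynomial.totalDegree_C, MvPolynomial.totalDegree_X]
  -- expand bind₁ via support sum
  rw [show (MvPolynomial.bind₁ f p) = MvPolynomial.eval₂ (MvPolynomial.C) f p from rfl]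
  rw [MvPolynomial.eval₂_eq]
  refine (MvPolynomial.totalDegree_finset_sum _ _).trans ?_
  refine Finset.sup_le fun ν hν => ?_
  refine (MvPolynomial.totalDegree_mul _ _).trans ?_
  rw [MvPolynomial.totalDegree_C, zero_add]
  refine (MvPolynomial.totalDegree_finset_prod _ _).trans ?_
  calc ∑ i ∈ ν.support, ((f i) ^ ν i).totalDegree
      ≤ ∑ i ∈ ν.support, ν i := by
        refine Finset.sum_le_sum fun i _ => ?_
        refine (MvPolynomial.totalDegree_pow _ _).trans ?_
        calc ν i * (f i).totalDegree ≤ ν i * 1 := Nat.mul_le_mul_left _ (hfdeg i)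
          _ = ν i := Nat.mul_one _
    _ ≤ p.totalDegree := MvPolynomial.le_totalDegree hν

/-- eval of affine substitution -/
lemma eval_bind₁_affine (a b : Fin dd → ℝ) (p : MvPolynomial (Fin dd) ℝ) (x : Fin dd → ℝ) :
    MvPolynomial.eval x
        (MvPolynomial.bind₁ (fun i => MvPolynomial.C (a i) + MvPolynomial.C (b i) * MvPolynomial.X i) p)
      = MvPolynomial.eval (fun i => a i + b i * x i) p := by
  rw [show (MvPolynomial.eval x) = (MvPolynomial.eval₂Hom (RingHom.id ℝ) x) from rfl]
  rw [MvPolynomial.eval₂Hom_bind₁]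
  simp


end Statement7Aux

open Statement7Aux in
theorem statement7 (dd d : ℕ) (α : Fin dd → ℕ) (hα : ∀ i, 0 < α i)
    (hmono : Monotone α) :
    ∃ D₀ : ℕ, ∀ D : ℕ, D₀ ≤ D → (∃ k : ℕ, D = 2 ^ k) →
      ∀ (I Ihat : DCube dd), I.valid α D → Ihat.valid α D →
        I.s < 0 → Ihat.s = I.s + 1 → I.toSet α D ⊆ Ihat.toSet α D →
        ∀ Q : MvPolynomial (Fin dd) ℝ, Q.totalDegree ≤ d →
          10 ^ 4 * qnorm Q (I.toSet α D) ≤ qnorm Q (Ihat.toSet α D) := by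
  classical
  obtain ⟨C, hC, hHL⟩ := HL dd d
  refine ⟨max 2 (Nat.ceil ((10:ℝ)^4 * d * C)), fun D hD _ I Ihat hIv hIhv hIs hIhs hsub Q hQdeg => ?_⟩
  have hD2 : 2 ≤ D := le_trans (le_max_left _ _) hD
  have hDR : (2:ℝ) ≤ (D:ℝ) := by exact_mod_cast hD2
  have hD0 : (0:ℝ) < D := by linarith
  have hD1 : (1:ℝ) ≤ D := by linarith
  have hDbig : (10:ℝ)^4 * d * C ≤ D := by
    refine le_trans (Nat.le_ceil _) ?_
    exact_mod_cast le_trans (le_max_right _ _) hD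
  set l : Fin dd → ℝ := fun i => (D : ℝ) ^ (I.s * (α i : ℤ)) with hl_def
  set L : Fin dd → ℝ := fun i => (D : ℝ) ^ (Ihat.s * (α i : ℤ)) with hL_def
  have hl : ∀ i, 0 < l i := fun i => zpow_pos hD0 _
  have hL : ∀ i, 0 < L i := fun i => zpow_pos hD0 _
  have hLl : ∀ i, L i = l i * (D:ℝ) ^ (α i : ℕ) := by
    intro i
    rw [hL_def, hl_def]
    simp only []
    rw [hIhs, add_mul, one_mul, zpow_add₀ (ne_of_gt hD0), zpow_natCast]
  have hpow_ge : ∀ i, (D:ℝ) ≤ (D:ℝ) ^ (α i : ℕ) := by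
    intro i
    calc (D:ℝ) = (D:ℝ)^1 := (pow_one _).symm
      _ ≤ (D:ℝ) ^ (α i : ℕ) := pow_le_pow_right₀ hD1 (hα i)
  -- corner of I
  set corner : Fin dd → ℝ := fun j => l j * I.k j with hcorner_def
  have hcornerI : corner ∈ I.toSet α D := by
    intro j
    constructor
    · exact le_refl _
    · have : (I.k j : ℝ) < (I.k j : ℝ) + 1 := by linarith
      exact mul_lt_mul_of_pos_left this (hl j)
  -- the subset inequalities
  have hineq : ∀ i, L i * Ihat.k i ≤ l i * I.k i ∧ l i * (I.k i + 1) ≤ L i * (Ihat.k i + 1) := by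
    intro i
    constructor
    · exact (hsub hcornerI i).1
    · by_contra hlt
      push_neg at hlt
      set pt : Fin dd → ℝ :=
        Function.update corner i (max (l i * I.k i) (L i * (Ihat.k i + 1))) with hpt_def
      have hptI : pt ∈ I.toSet α D := by
        intro j
        by_cases hji : j = i
        · subst hji
          rw [hpt_def, Function.update_self]
          constructor
          · exact le_max_left _ _
          · refine max_lt ?_ hlt
            have : (I.k j : ℝ) < (I.k j : ℝ) + 1 := by linarith
            exact mul_lt_mul_of_pos_left this (hl j)
        · rw [hpt_def, Function.update_of_ne hji]
          exact hcornerI j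
      have h1 := (hsub hptI i).2
      rw [hpt_def, Function.update_self] at h1
      exact absurd h1 (not_lt.2 (le_max_right _ _))
  set ahat : Fin dd → ℝ := fun i => L i * Ihat.k i with hahat_def
  set aa : Fin dd → ℝ := fun i => l i * I.k i with haa_def
  have hIset : ∀ x, x ∈ I.toSet α D ↔ ∀ i, aa i ≤ x i ∧ x i < aa i + l i := by
    intro x
    constructor <;> intro h i
    · have := h i
      rw [haa_def]
      simp only []
      constructor
      · exact this.1
      · calc x i < l i * (I.k i + 1) := this.2
          _ = l i * I.k i + l i := by ring
    · have := h i
      rw [haa_def] at this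
      simp only [] at this
      refine ⟨this.1, ?_⟩
      calc x i < l i * I.k i + l i := this.2
        _ = l i * (I.k i + 1) := by ring
  have hIhset : ∀ x, x ∈ Ihat.toSet α D ↔ ∀ i, ahat i ≤ x i ∧ x i < ahat i + L i := by
    intro x
    constructor <;> intro h i
    · have := h i
      rw [hahat_def]
      simp only []
      refine ⟨this.1, ?_⟩
      calc x i < L i * (Ihat.k i + 1) := this.2
        _ = L i * Ihat.k i + L i := by ring
    · have := h i
      rw [hahat_def] at this
      simp only [] at this
      refine ⟨this.1, ?_⟩
      calc x i < L i * Ihat.k i + L i := this.2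
        _ = L i * (Ihat.k i + 1) := by ring
  -- the rescaled polynomial
  set R : MvPolynomial (Fin dd) ℝ :=
    MvPolynomial.bind₁ (fun i => MvPolynomial.C (ahat i) + MvPolynomial.C (L i) * MvPolynomial.X i) Q
    with hR_def
  have hRdeg : R.totalDegree ≤ d := le_trans (totalDegree_bind₁_affine ahat L Q) hQdeg
  have hReval : ∀ x, MvPolynomial.eval x R = MvPolynomial.eval (fun i => ahat i + L i * x i) Q :=
    fun x => eval_bind₁_affine ahat L Q x
  set cR : {m : Fin dd → Fin (d + 1) // m ≠ 0} → ℝ :=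
    fun m => MvPolynomial.coeff (expF (m : Fin dd → Fin (d+1))) R with hcR_def
  set S : ℝ := ∑ m, |cR m| with hS_def
  have hS0 : 0 ≤ S := Finset.sum_nonneg fun m _ => abs_nonneg _
  have hKI : ∀ x, MvPolynomial.eval x R = MvPolynomial.coeff 0 R + Pfun dd d cR x :=
    fun x => eval_eq_Pfun R hRdeg x
  -- φ maps cube0 into Ihat
  have hφmem : ∀ x ∈ cube0 dd, (fun i => ahat i + L i * x i) ∈ Ihat.toSet α D := by
    intro x hx
    rw [hIhset]
    intro i
    constructor
    · have : 0 ≤ L i * x i := mul_nonneg (le_of_lt (hL i)) (hx i).1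
      linarith
    · have : L i * x i < L i := by
        calc L i * x i < L i * 1 := mul_lt_mul_of_pos_left (hx i).2 (hL i)
          _ = L i := mul_one _
      linarith
  -- bound on eval Q over Ihat
  set cb : Fin dd → ℝ := fun i => L i * (Ihat.k i + 1) with hcb_def
  have hcb0 : ∀ i, 0 ≤ ahat i := by
    intro i
    rw [hahat_def]
    have := (hIhv.2 i).1
    have : (0:ℝ) ≤ (Ihat.k i : ℝ) := by exact_mod_cast this
    positivity
  have hQbd : ∀ z ∈ Ihat.toSet α D, |MvPolynomial.eval z Q| ≤
      ∑ ν ∈ Q.support, |MvPolynomial.coeff ν Q| * ∏ i, (max 1 (cb i)) ^ d := by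
    intro z hz
    refine eval_abs_le Q hQdeg cb z fun i => ?_
    have h1 := (hz i).1
    have h2 := (hz i).2
    rw [abs_le]
    constructor
    · have : (0:ℝ) ≤ z i := le_trans (hcb0 i) h1
      have hcbnn : 0 ≤ cb i := by
        rw [hcb_def]
        have h3 : (0:ℝ) ≤ (Ihat.k i : ℝ) := by exact_mod_cast (hIhv.2 i).1
        have := hL i
        positivity
      linarith
    · exact le_of_lt h2
  -- Step 2b : osc R cube0 ≤ osc Q Ihat
  have hstep2b : osc (fun x => MvPolynomial.eval x R) (cube0 dd)
      ≤ osc (fun x => MvPolynomial.eval x Q) (Ihat.toSet α D) := by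
    refine osc_le osc_nonneg fun x hx y hy => ?_
    rw [hReval x, hReval y]
    exact le_osc hQbd (hφmem x hx) (hφmem y hy)
  -- Step 2a : S ≤ C * osc R cube0
  have hosc_eq : osc (Pfun dd d cR) (cube0 dd) = osc (fun x => MvPolynomial.eval x R) (cube0 dd) := by
    refine osc_congr fun x _ y _ => ?_
    rw [hKI x, hKI y]
    ring
  have hstep2a : S ≤ C * osc (fun x => MvPolynomial.eval x R) (cube0 dd) := by
    rw [← hosc_eq]
    exact hHL cR
  -- Step 1 : osc Q I ≤ (d / D) * S
  have hstep1 : osc (fun x => MvPolynomial.eval x Q) (I.toSet α D) ≤ ((d:ℝ) * (D:ℝ)⁻¹) * S := by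
    refine osc_le (by positivity) fun x hx y hy => ?_
    set x' : Fin dd → ℝ := fun i => (x i - ahat i) / L i with hx'_def
    set y' : Fin dd → ℝ := fun i => (y i - ahat i) / L i with hy'_def
    have hmem : ∀ z, z ∈ I.toSet α D → (fun i => (z i - ahat i) / L i) ∈ cube0 dd := by
      intro z hz
      have hzh := hsub hz
      rw [hIhset] at hzh
      intro i
      constructor
      · exact div_nonneg (by linarith [(hzh i).1]) (le_of_lt (hL i))
      · rw [div_lt_one (hL i)]
        linarith [(hzh i).2]
    have hx' : x' ∈ cube0 dd := hmem x hx
    have hy' : y' ∈ cube0 dd := hmem y hy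
    have hφx : (fun i => ahat i + L i * x' i) = x := by
      funext i
      rw [hx'_def]
      field_simp
      rw [mul_div_cancel_left₀ _ (hL i).ne']; ring
    have hφy : (fun i => ahat i + L i * y' i) = y := by
      funext i
      rw [hy'_def]
      field_simp
      rw [mul_div_cancel_left₀ _ (hL i).ne']; ring
    have hex : MvPolynomial.eval x Q = MvPolynomial.eval x' R := by rw [hReval x', hφx]
    have hey : MvPolynomial.eval y Q = MvPolynomial.eval y' R := by rw [hReval y', hφy]
    rw [hex, hey, hKI x', hKI y']
    have heq : MvPolynomial.coeff 0 R + Pfun dd d cR x' - (MvPolynomial.coeff 0 R + Pfun dd d cR y')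
        = ∑ m : {m : Fin dd → Fin (d + 1) // m ≠ 0},
            cR m * (∏ i, x' i ^ ((m : Fin dd → Fin (d+1)) i : ℕ)
              - ∏ i, y' i ^ ((m : Fin dd → Fin (d+1)) i : ℕ)) := by
      unfold Pfun
      rw [Finset.sum_congr rfl (fun m _ => mul_sub (cR m)
        (∏ i, x' i ^ ((m : Fin dd → Fin (d+1)) i : ℕ))
        (∏ i, y' i ^ ((m : Fin dd → Fin (d+1)) i : ℕ))), Finset.sum_sub_distrib]
      ring
    rw [heq]
    refine (Finset.abs_sum_le_sum_abs _ _).trans ?_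
    have hδ : ∀ i, |x' i - y' i| ≤ (D:ℝ)⁻¹ := by
      intro i
      have hxi := (hIset x).1 hx i
      have hyi := (hIset y).1 hy i
      have habs : |x i - y i| ≤ l i :=
        abs_sub_le_iff.2 ⟨by linarith [hxi.1, hxi.2, hyi.1, hyi.2],
          by linarith [hxi.1, hxi.2, hyi.1, hyi.2]⟩
      have hquot : |x' i - y' i| = |x i - y i| / L i := by
        rw [hx'_def, hy'_def]
        simp only []
        rw [div_sub_div_same, abs_div, abs_of_pos (hL i)]
        congr 2
        ring
      have h1 : |x' i - y' i| ≤ l i / L i := by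
        rw [hquot]
        exact (div_le_div_iff_of_pos_right (hL i)).2 habs
      refine h1.trans ?_
      have h2 : l i / L i = ((D:ℝ) ^ (α i : ℕ))⁻¹ := by
        rw [hLl i]
        rw [eq_comm, inv_eq_iff_eq_inv, eq_comm, inv_div]
        rw [mul_comm, mul_div_assoc, div_self (ne_of_gt (hl i)), mul_one]
      rw [h2]
      exact inv_anti₀ hD0 (hpow_ge i)
    have hx1 : ∀ i, |x' i| ≤ 1 := fun i => abs_le.2 ⟨by linarith [(hx' i).1], le_of_lt (hx' i).2⟩
    have hy1 : ∀ i, |y' i| ≤ 1 := fun i => abs_le.2 ⟨by linarith [(hy' i).1], le_of_lt (hy' i).2⟩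
    have hterm : ∀ m ∈ (Finset.univ : Finset {m : Fin dd → Fin (d + 1) // m ≠ 0}),
        |cR m * (∏ i, x' i ^ ((m : Fin dd → Fin (d+1)) i : ℕ)
          - ∏ i, y' i ^ ((m : Fin dd → Fin (d+1)) i : ℕ))|
        ≤ |cR m| * ((d:ℝ) * (D:ℝ)⁻¹) := by
      intro m _
      rw [abs_mul]
      by_cases hm : (∑ i, ((m.val i : ℕ))) ≤ d
      · refine mul_le_mul_of_nonneg_left ?_ (abs_nonneg _)
        have h1 := mono_diff_le (fun i => ((m.val i : ℕ))) x' y' ((D:ℝ)⁻¹) hx1 hy1 hδ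
        refine h1.trans ?_
        refine mul_le_mul_of_nonneg_right ?_ (inv_nonneg.2 (le_of_lt hD0))
        exact_mod_cast hm
      · have hz : cR m = 0 := coeff_expF_eq_zero hRdeg (not_le.1 hm)
        rw [hz]
        simp
    refine (Finset.sum_le_sum hterm).trans ?_
    rw [← Finset.sum_mul]
    rw [← hS_def]
    ring_nf
    exact le_refl _
  -- final chain
  have hO0 : 0 ≤ osc (fun x => MvPolynomial.eval x Q) (Ihat.toSet α D) := osc_nonneg
  have h2 : S ≤ C * osc (fun x => MvPolynomial.eval x Q) (Ihat.toSet α D) :=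
    hstep2a.trans (mul_le_mul_of_nonneg_left hstep2b (le_of_lt hC))
  have hkey : (10:ℝ)^4 * d * C * (D:ℝ)⁻¹ ≤ 1 := by
    have h3 : (10:ℝ)^4 * d * C * (D:ℝ)⁻¹ ≤ (D:ℝ) * (D:ℝ)⁻¹ :=
      mul_le_mul_of_nonneg_right hDbig (inv_nonneg.2 (le_of_lt hD0))
    rwa [mul_inv_cancel₀ (ne_of_gt hD0)] at h3
  show (10:ℝ)^4 * osc (fun x => MvPolynomial.eval x Q) (I.toSet α D)
      ≤ osc (fun x => MvPolynomial.eval x Q) (Ihat.toSet α D)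
  calc (10:ℝ)^4 * osc (fun x => MvPolynomial.eval x Q) (I.toSet α D)
      ≤ (10:ℝ)^4 * (((d:ℝ) * (D:ℝ)⁻¹) * S) :=
        mul_le_mul_of_nonneg_left hstep1 (by norm_num)
    _ ≤ (10:ℝ)^4 * (((d:ℝ) * (D:ℝ)⁻¹) *
          (C * osc (fun x => MvPolynomial.eval x Q) (Ihat.toSet α D))) := by
        refine mul_le_mul_of_nonneg_left ?_ (by norm_num)
        exact mul_le_mul_of_nonneg_left h2 (by positivity)
    _ = ((10:ℝ)^4 * d * C * (D:ℝ)⁻¹) * osc (fun x => MvPolynomial.eval x Q) (Ihat.toSet α D) := by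
        ring
    _ ≤ 1 * osc (fun x => MvPolynomial.eval x Q) (Ihat.toSet α D) :=
        mul_le_mul_of_nonneg_right hkey hO0
    _ = osc (fun x => MvPolynomial.eval x Q) (Ihat.toSet α D) := one_mul _

end
end

section
/- Suppose D is a power of two large enough (depending only on α, d, 𝐝) that ‖Q‖_{Î} ≥ 10⁴ ‖Q‖_I for every D-adic cube I of negative scale and every Q ∈ 𝒬, and fix integers s_min ≤ s_max ≤ 0. Then there exist collections of pairs 𝔓_I, indexed by the D-adic cubes I ∈ 𝒟 with s_min ≤ s(I) ≤ s_max, where each pair 𝔭 ∈ 𝔓_I consists of the spatial cube I_𝔭 = I and a Borel set 𝒬(𝔭) ⊂ 𝒬, such that: (1) every 𝔭 ∈ 𝔓_I has a central polynomial Q_𝔭 ∈ 𝒬(𝔭) with B_I(Q_𝔭, 0.2) ⊂ 𝒬(𝔭) ⊂ B_I(Q_𝔭, 1); (2) for each such I the sets 𝒬(𝔭), 𝔭 ∈ 𝔓_I, form a disjoint cover of 𝒬; (3) if I ⊂ I', 𝔭 ∈ 𝔓_I and 𝔭' ∈ 𝔓_{I'}, then either 𝒬(𝔭) ∩ 𝒬(𝔭')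 = ∅ or 𝒬(𝔭') ⊂ 𝒬(𝔭). -/
open MeasureTheory Set
open scoped ENNReal NNReal BigOperators

noncomputable section

/-- The space `𝒬` of real polynomials of degree at most `d` without constant term. -/
def QSpace (dd d : ℕ) : Set (MvPolynomial (Fin dd) ℝ) :=
  {Q | Q.totalDegree ≤ d ∧ MvPolynomial.coeff 0 Q = 0}

/-- `B_I(Q, r)`. -/
def qball {dd : ℕ} (d : ℕ) (I : Set (Fin dd → ℝ)) (Q : MvPolynomial (Fin dd) ℝ) (r : ℝ) :
    Set (MvPolynomial (Fin dd) ℝ) :=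
  {Q' ∈ QSpace dd d | qnorm (Q' - Q) I ≤ r}

namespace Aux
open MvPolynomial

variable {dd d : ℕ} {α : Fin dd → ℕ} {D : ℕ} {I : Set (Fin dd → ℝ)}
  {Q A B C : MvPolynomial (Fin dd) ℝ} {M : ℝ}


lemma qnorm_le_aux (hM : 0 ≤ M)
    (h : ∀ x ∈ I, ∀ y ∈ I, |eval x Q - eval y Q| ≤ M) : qnorm Q I ≤ M :=
  Real.iSup_le (fun x => Real.iSup_le (fun hx => Real.iSup_le (fun y =>
    Real.iSup_le (fun hy => h x hx y hy) hM) hM) hM) hM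

lemma le_qnorm_aux (hM : 0 ≤ M)
    (hb : ∀ x ∈ I, ∀ y ∈ I, |eval x Q - eval y Q| ≤ M)
    {x y : Fin dd → ℝ} (hx : x ∈ I) (hy : y ∈ I) :
    |eval x Q - eval y Q| ≤ qnorm Q I := by
  have h1 : |eval x Q - eval y Q| ≤ ⨆ (_ : y ∈ I), |eval x Q - eval y Q| :=
    le_ciSup (f := fun _ : y ∈ I => |eval x Q - eval y Q|)
      ⟨|eval x Q - eval y Q|, by rintro v ⟨hv, rfl⟩; exact le_rfl⟩ hy
  have h2 : (⨆ (_ : y ∈ I), |eval x Q - eval y Q|) ≤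
      ⨆ y' ∈ I, |eval x Q - eval y' Q| :=
    le_ciSup (f := fun y' => ⨆ (_ : y' ∈ I), |eval x Q - eval y' Q|)
      ⟨M, by rintro v ⟨y', rfl⟩; exact Real.iSup_le (fun hy' => hb x hx y' hy') hM⟩ y
  have h3 : (⨆ y' ∈ I, |eval x Q - eval y' Q|) ≤
      ⨆ (_ : x ∈ I), ⨆ y' ∈ I, |eval x Q - eval y' Q| :=
    le_ciSup (f := fun _ : x ∈ I => ⨆ y' ∈ I, |eval x Q - eval y' Q|)
      ⟨⨆ y' ∈ I, |eval x Q - eval y' Q|, by rintro v ⟨hv, rfl⟩; exact le_rfl⟩ hx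
  have h4 : (⨆ (_ : x ∈ I), ⨆ y' ∈ I, |eval x Q - eval y' Q|) ≤ qnorm Q I :=
    le_ciSup (f := fun x' => ⨆ (_ : x' ∈ I), ⨆ y' ∈ I, |eval x' Q - eval y' Q|)
      ⟨M, by rintro v ⟨x', rfl⟩; exact Real.iSup_le (fun hx' => Real.iSup_le (fun y' =>
        Real.iSup_le (fun hy' => hb x' hx' y' hy') hM) hM) hM⟩ x
  exact h1.trans (h2.trans (h3.trans h4))

lemma qnorm_sub_comm : qnorm (A - B) I = qnorm (B - A) I := by
  unfold qnorm
  refine iSup_congr fun x => iSup_congr fun hx => iSup_congr fun y => iSup_congr fun hy => ?_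
  rw [map_sub, map_sub, map_sub, map_sub, ← abs_neg]
  ring_nf


lemma qspace_sub (hA : A ∈ QSpace dd d) (hB : B ∈ QSpace dd d) : A - B ∈ QSpace dd d := by
  constructor
  · exact le_trans (totalDegree_sub A B) (max_le hA.1 hB.1)
  · simp only [coeff_sub, hA.2, hB.2, sub_zero]

lemma cube_bound (J : DCube dd) (Q : MvPolynomial (Fin dd) ℝ) :
    ∃ M, 0 ≤ M ∧ ∀ x ∈ J.toSet α D, ∀ y ∈ J.toSet α D, |eval x Q - eval y Q| ≤ M := by
  set a : Fin dd → ℝ := fun i => (D : ℝ) ^ (J.s * (α i : ℤ)) * J.k i with ha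
  set b : Fin dd → ℝ := fun i => (D : ℝ) ^ (J.s * (α i : ℤ)) * (J.k i + 1) with hb
  have hsub : J.toSet α D ⊆ Set.Icc a b := by
    intro x hx
    constructor
    · intro i; exact (hx i).1
    · intro i; exact le_of_lt (hx i).2
  have hcpt : IsCompact (Set.Icc a b) := isCompact_Icc
  obtain ⟨Cb, hCb⟩ := hcpt.exists_bound_of_continuousOn (Q.continuous_eval.continuousOn)
  refine ⟨2 * |Cb|, by positivity, fun x hx y hy => ?_⟩
  have h1 := hCb x (hsub hx)
  have h2 := hCb y (hsub hy)
  rw [Real.norm_eq_abs] at h1 h2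
  have := abs_sub (eval x Q) (eval y Q)
  calc |eval x Q - eval y Q| ≤ |eval x Q| + |eval y Q| := abs_sub _ _
    _ ≤ |Cb| + |Cb| := add_le_add (h1.trans (le_abs_self _)) (h2.trans (le_abs_self _))
    _ = 2 * |Cb| := by ring

variable (α D) in
lemma corner_mem (h1D : 1 ≤ D) (J : DCube dd) :
    (fun i => (D : ℝ) ^ (J.s * (α i : ℤ)) * J.k i) ∈ J.toSet α D := by
  intro i
  have hpos : (0:ℝ) < (D : ℝ) ^ (J.s * (α i : ℤ)) :=
    zpow_pos (by exact_mod_cast Nat.lt_of_lt_of_le Nat.zero_lt_one h1D) _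
  exact ⟨le_rfl, mul_lt_mul_of_pos_left (by linarith) hpos⟩

lemma qnorm_nonneg_cube (h1D : 1 ≤ D) (J : DCube dd) : 0 ≤ qnorm Q (J.toSet α D) := by
  obtain ⟨M, hM0, hM⟩ := cube_bound (α := α) (D := D) J Q
  have h := le_qnorm_aux hM0 hM (corner_mem α D h1D J) (corner_mem α D h1D J)
  simpa using h

lemma le_qnorm_cube (h1D : 1 ≤ D) (J : DCube dd) {x y : Fin dd → ℝ}
    (hx : x ∈ J.toSet α D) (hy : y ∈ J.toSet α D) :
    |eval x Q - eval y Q| ≤ qnorm Q (J.toSet α D) := by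
  obtain ⟨M, hM0, hM⟩ := cube_bound (α := α) (D := D) J Q
  exact le_qnorm_aux hM0 hM hx hy

lemma qnorm_sub_le (h1D : 1 ≤ D) (J : DCube dd) (A B C : MvPolynomial (Fin dd) ℝ) :
    qnorm (A - C) (J.toSet α D) ≤ qnorm (A - B) (J.toSet α D) + qnorm (B - C) (J.toSet α D) := by
  have hn1 := qnorm_nonneg_cube (Q := A - B) (α := α) h1D J
  have hn2 := qnorm_nonneg_cube (Q := B - C) (α := α) h1D J
  refine qnorm_le_aux (by linarith) (fun x hx y hy => ?_)
  have e1 := le_qnorm_cube (Q := A - B) (α := α) h1D J hx hy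
  have e2 := le_qnorm_cube (Q := B - C) (α := α) h1D J hx hy
  have : eval x (A - C) - eval y (A - C) =
      (eval x (A - B) - eval y (A - B)) + (eval x (B - C) - eval y (B - C)) := by
    simp only [map_sub]; ring
  rw [this]
  exact (abs_add_le _ _).trans (by linarith)

lemma qnorm_zero_le (J : DCube dd) {c : ℝ} (hc : 0 ≤ c) (hAB : A = B) :
    qnorm (A - B) (J.toSet α D) ≤ c := by
  refine qnorm_le_aux hc (fun x hx y hy => ?_)
  simpa [hAB] using hc

lemma exists_max_sep {P : Type*} (S : Set P) (dfn : P → P → ℝ)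
    (hsymm : ∀ a b, dfn a b = dfn b a) (hself : ∀ a ∈ S, dfn a a ≤ 0.6) :
    ∃ Z ⊆ S, (∀ z ∈ Z, ∀ z' ∈ Z, z ≠ z' → ¬ dfn z z' ≤ 0.6) ∧
      (∀ q ∈ S, ∃ z ∈ Z, dfn q z ≤ 0.6) := by
  set F : Set (Set P) := {T | T ⊆ S ∧ ∀ z ∈ T, ∀ z' ∈ T, z ≠ z' → ¬ dfn z z' ≤ 0.6} with hF
  obtain ⟨m, hm⟩ := zorn_subset F (fun c hcF hchain => by
    refine ⟨⋃₀ c, ⟨?_, ?_⟩, fun s hs => subset_sUnion_of_mem hs⟩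
    · exact sUnion_subset fun t ht => (hcF ht).1
    · rintro z ⟨t1, ht1, hz1⟩ z' ⟨t2, ht2, hz2⟩ hne
      rcases eq_or_ne t1 t2 with rfl | htne
      · exact (hcF ht1).2 z hz1 z' hz2 hne
      · rcases hchain ht1 ht2 htne with h | h
        · exact (hcF ht2).2 z (h hz1) z' hz2 hne
        · exact (hcF ht1).2 z hz1 z' (h hz2) hne)
  refine ⟨m, hm.prop.1, hm.prop.2, fun q hq => ?_⟩
  by_contra hcov
  push_neg at hcov
  have hins : insert q m ∈ F := by
    refine ⟨insert_subset hq hm.prop.1, ?_⟩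
    rintro z (rfl | hz) z' (rfl | hz') hne
    · exact absurd rfl hne
    · intro hle; exact (not_le.2 (hcov z' hz')) hle
    · intro hle; rw [hsymm] at hle; exact (not_le.2 (hcov z hz)) hle
    · exact hm.prop.2 z hz z' hz' hne
  have : insert q m ⊆ m := hm.2 hins (subset_insert _ _)
  have hqm : q ∈ m := this (mem_insert _ _)
  exact (not_le.2 (hcov q hqm)) (hself q hq)


def PreGood (α : Fin dd → ℕ) (D d : ℕ) (ε : ℝ) (J : DCube dd)
    (P : Set (Set (MvPolynomial (Fin dd) ℝ) × MvPolynomial (Fin dd) ℝ)) : Prop :=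
  (∀ p ∈ P, p.2 ∈ QSpace dd d ∧ p.2 ∈ p.1) ∧
  (∀ p ∈ P, ∀ Q ∈ p.1, Q ∈ QSpace dd d ∧ qnorm (Q - p.2) (J.toSet α D) ≤ ε) ∧
  (⋃ p ∈ P, p.1) = QSpace dd d ∧
  (∀ p ∈ P, ∀ p' ∈ P, p ≠ p' → p.1 ∩ p'.1 = ∅)

def Good (α : Fin dd → ℕ) (D d : ℕ) (J : DCube dd)
    (P : Set (Set (MvPolynomial (Fin dd) ℝ) × MvPolynomial (Fin dd) ℝ)) : Prop :=
  PreGood α D d 0.71 J P ∧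
  ∀ p ∈ P, ∀ Q ∈ QSpace dd d, qnorm (Q - p.2) (J.toSet α D) ≤ 0.2 → Q ∈ p.1

lemma Lstep (h1D : 1 ≤ D) (J : DCube dd)
    (Phat : Set (Set (MvPolynomial (Fin dd) ℝ) × MvPolynomial (Fin dd) ℝ))
    (hpre : PreGood α D d (1/10000) J Phat) :
    ∃ P, Good α D d J P ∧ ∀ phat ∈ Phat, ∃ p ∈ P, phat.1 ⊆ p.1 := by
  classical
  obtain ⟨hc, hsm, hun, hdis⟩ := hpre
  obtain ⟨Z, hZS, hsep, hcov⟩ := exists_max_sep (Prod.snd '' Phat)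
    (fun a b => qnorm (a - b) (J.toSet α D))
    (fun a b => qnorm_sub_comm)
    (fun a _ => qnorm_zero_le J (by norm_num) rfl)
  set φ : Set (MvPolynomial (Fin dd) ℝ) × MvPolynomial (Fin dd) ℝ → MvPolynomial (Fin dd) ℝ :=
    fun p => if h2 : ∃ z ∈ Z, qnorm (p.2 - z) (J.toSet α D) ≤ 0.6 then
        (if h1 : ∃ z ∈ Z, qnorm (p.2 - z) (J.toSet α D) ≤ 0.25 then h1.choose else h2.choose)
      else p.2 with hφdef
  have hφZ : ∀ p ∈ Phat, φ p ∈ Z ∧ qnorm (p.2 - φ p) (J.toSet α D) ≤ 0.6 := by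
    intro p hp
    have h2 : ∃ z ∈ Z, qnorm (p.2 - z) (J.toSet α D) ≤ 0.6 := hcov _ ⟨p, hp, rfl⟩
    simp only [hφdef, dif_pos h2]
    split_ifs with h1
    · exact ⟨h1.choose_spec.1, h1.choose_spec.2.trans (by norm_num)⟩
    · exact ⟨h2.choose_spec.1, h2.choose_spec.2⟩
  have huniq : ∀ p ∈ Phat, ∀ z ∈ Z, qnorm (p.2 - z) (J.toSet α D) ≤ 0.25 → φ p = z := by
    intro p hp z hz hle
    have h1 : ∃ z ∈ Z, qnorm (p.2 - z) (J.toSet α D) ≤ 0.25 := ⟨z, hz, hle⟩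
    have h2 : ∃ z ∈ Z, qnorm (p.2 - z) (J.toSet α D) ≤ 0.6 :=
      ⟨z, hz, hle.trans (by norm_num)⟩
    have hφ : φ p = h1.choose := by simp only [hφdef, dif_pos h2, dif_pos h1]
    obtain ⟨hz0, hle0⟩ := h1.choose_spec
    rw [hφ]
    by_contra hne
    have htr : qnorm (h1.choose - z) (J.toSet α D) ≤
        qnorm (h1.choose - p.2) (J.toSet α D) + qnorm (p.2 - z) (J.toSet α D) :=
      qnorm_sub_le h1D J _ _ _
    have hsw : qnorm (h1.choose - p.2) (J.toSet α D) = qnorm (p.2 - h1.choose) (J.toSet α D) :=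
      qnorm_sub_comm
    exact hsep _ hz0 z hz hne (by linarith)
  set cell : MvPolynomial (Fin dd) ℝ → Set (MvPolynomial (Fin dd) ℝ) :=
    fun z => {Q | ∃ q ∈ Phat, φ q = z ∧ Q ∈ q.1} with hcell
  refine ⟨(fun z => (cell z, z)) '' Z, ⟨⟨?_, ?_, ?_, ?_⟩, ?_⟩, ?_⟩
  · -- centers
    rintro p ⟨z, hz, rfl⟩
    obtain ⟨q0, hq0, hq0z⟩ := hZS hz
    constructor
    · exact hq0z ▸ (hc q0 hq0).1
    · have hφq0 : φ q0 = z := huniq q0 hq0 z hz (qnorm_zero_le J (by norm_num) hq0z)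
      exact ⟨q0, hq0, hφq0, hq0z ▸ (hc q0 hq0).2⟩
  · -- cells small
    rintro p ⟨z, hz, rfl⟩ Q ⟨q, hq, hφq, hQq⟩
    obtain ⟨hQsp, hQn⟩ := hsm q hq Q hQq
    refine ⟨hQsp, ?_⟩
    have htr : qnorm (Q - z) (J.toSet α D) ≤
        qnorm (Q - q.2) (J.toSet α D) + qnorm (q.2 - z) (J.toSet α D) := qnorm_sub_le h1D J _ _ _
    have h2 : qnorm (q.2 - z) (J.toSet α D) ≤ 0.6 := hφq ▸ (hφZ q hq).2
    calc qnorm (Q - z) (J.toSet α D) ≤ _ := htr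
      _ ≤ 1/10000 + 0.6 := add_le_add hQn h2
      _ ≤ 0.71 := by norm_num
  · -- union
    apply Set.eq_of_subset_of_subset
    · rintro Q hQ
      simp only [mem_iUnion] at hQ
      obtain ⟨p, hp, hQp⟩ := hQ
      obtain ⟨z, hz, rfl⟩ := hp
      obtain ⟨q, hq, _, hQq⟩ := hQp
      exact (hsm q hq Q hQq).1
    · intro Q hQ
      have : Q ∈ ⋃ p ∈ Phat, p.1 := hun ▸ hQ
      simp only [mem_iUnion] at this ⊢
      obtain ⟨q, hq, hQq⟩ := this
      exact ⟨(cell (φ q), φ q), ⟨φ q, (hφZ q hq).1, rfl⟩, q, hq, rfl, hQq⟩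
  · -- disjoint
    rintro p ⟨z, hz, rfl⟩ p' ⟨z', hz', rfl⟩ hne
    have hzz : z ≠ z' := fun h => hne (by rw [h])
    rw [Set.eq_empty_iff_forall_notMem]
    rintro Q ⟨⟨q, hq, hφq, hQq⟩, ⟨q', hq', hφq', hQq'⟩⟩
    have hqq : q ≠ q' := fun h => hzz (by rw [← hφq, ← hφq', h])
    have := hdis q hq q' hq' hqq
    rw [Set.eq_empty_iff_forall_notMem] at this
    exact this Q ⟨hQq, hQq'⟩
  · -- 0.2 balls
    rintro p ⟨z, hz, rfl⟩ Q hQsp hQn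
    have : Q ∈ ⋃ p ∈ Phat, p.1 := hun ▸ hQsp
    simp only [mem_iUnion] at this
    obtain ⟨q, hq, hQq⟩ := this
    have hsmall : qnorm (Q - q.2) (J.toSet α D) ≤ 1/10000 := (hsm q hq Q hQq).2
    have htr : qnorm (q.2 - z) (J.toSet α D) ≤
        qnorm (q.2 - Q) (J.toSet α D) + qnorm (Q - z) (J.toSet α D) := qnorm_sub_le h1D J _ _ _
    have hsw : qnorm (q.2 - Q) (J.toSet α D) = qnorm (Q - q.2) (J.toSet α D) := qnorm_sub_comm
    have hφq : φ q = z := huniq q hq z hz (by linarith)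
    exact ⟨q, hq, hφq, hQq⟩
  · -- refines
    intro phat hphat
    exact ⟨(cell (φ phat), φ phat), ⟨φ phat, (hφZ phat hphat).1, rfl⟩, fun Q hQ => ⟨phat, hphat, rfl, hQ⟩⟩

lemma pre_singletons (J : DCube dd) :
    PreGood α D d (1/10000) J ((fun Q => ({Q}, Q)) '' QSpace dd d) := by
  refine ⟨?_, ?_, ?_, ?_⟩
  · rintro p ⟨Q, hQ, rfl⟩; exact ⟨hQ, rfl⟩
  · rintro p ⟨Q, hQ, rfl⟩ Q' hQ'
    simp only [mem_singleton_iff] at hQ'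
    subst hQ'
    exact ⟨hQ, qnorm_zero_le J (by norm_num) rfl⟩
  · apply Set.eq_of_subset_of_subset
    · rintro Q hQ
      simp only [mem_iUnion] at hQ
      obtain ⟨p, ⟨Q', hQ', rfl⟩, hQp⟩ := hQ
      simp only [mem_singleton_iff] at hQp
      subst hQp; exact hQ'
    · intro Q hQ
      simp only [mem_iUnion]
      exact ⟨({Q}, Q), ⟨Q, hQ, rfl⟩, rfl⟩
  · rintro p ⟨Q, hQ, rfl⟩ p' ⟨Q', hQ', rfl⟩ hne
    have : Q ≠ Q' := fun h => hne (by rw [h])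
    rw [Set.eq_empty_iff_forall_notMem]
    rintro R ⟨hR, hR'⟩
    simp only [mem_singleton_iff] at hR hR'
    exact this (hR ▸ hR' ▸ rfl)

open Classical in
def pick {dd : ℕ} (α : Fin dd → ℕ) (D d : ℕ) (J : DCube dd)
    (Phat : Set (Set (MvPolynomial (Fin dd) ℝ) × MvPolynomial (Fin dd) ℝ)) :
    Set (Set (MvPolynomial (Fin dd) ℝ) × MvPolynomial (Fin dd) ℝ) :=
  if h : ∃ P, Good α D d J P ∧ ∀ phat ∈ Phat, ∃ p ∈ P, phat.1 ⊆ p.1 then h.choose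
  else if h' : ∃ P, Good α D d J P then h'.choose else ∅

lemma exists_good (h1D : 1 ≤ D) (J : DCube dd) : ∃ P, Good α D d J P := by
  obtain ⟨P, hP, -⟩ := Lstep h1D J _ (pre_singletons (α := α) (D := D) (d := d) J)
  exact ⟨P, hP⟩

lemma pick_good (h1D : 1 ≤ D) (J : DCube dd) (Phat : Set _) : Good α D d J (pick α D d J Phat) := by
  unfold pick
  split_ifs with h h'
  · exact h.choose_spec.1
  · exact h'.choose_spec
  · exact absurd (exists_good h1D J) h'

lemma pick_refines (h1D : 1 ≤ D) (J : DCube dd)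
    (Phat : Set (Set (MvPolynomial (Fin dd) ℝ) × MvPolynomial (Fin dd) ℝ))
    (hpre : PreGood α D d (1/10000) J Phat) :
    ∀ phat ∈ Phat, ∃ p ∈ pick α D d J Phat, phat.1 ⊆ p.1 := by
  unfold pick
  have h : ∃ P, Good α D d J P ∧ ∀ phat ∈ Phat, ∃ p ∈ P, phat.1 ⊆ p.1 := Lstep h1D J Phat hpre
  rw [dif_pos h]
  exact h.choose_spec.2

def cparent {dd : ℕ} (α : Fin dd → ℕ) (D : ℕ) (J : DCube dd) : DCube dd := ⟨J.s + 1, fun i => J.k i / (D : ℤ) ^ (α i)⟩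

def part {dd : ℕ} (α : Fin dd → ℕ) (D d : ℕ) :
    ℕ → DCube dd → Set (Set (MvPolynomial (Fin dd) ℝ) × MvPolynomial (Fin dd) ℝ)
  | 0, J => pick α D d J ((fun Q => ({Q}, Q)) '' QSpace dd d)
  | n+1, J => pick α D d J (part α D d n (cparent α D J))

lemma good_part (h1D : 1 ≤ D) (n : ℕ) (J : DCube dd) : Good α D d J (part α D d n J) := by
  cases n <;> (simp only [part]; exact pick_good h1D J _)


lemma scale_split (h1D : 1 ≤ D) (s : ℤ) (a : ℕ) :
    (D:ℝ) ^ ((s+1) * (a:ℤ)) = (D:ℝ)^(s*(a:ℤ)) * (((D:ℤ)^a : ℤ) : ℝ) := by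
  have hD0 : (D:ℝ) ≠ 0 := by
    have : (0:ℝ) < D := by exact_mod_cast Nat.lt_of_lt_of_le Nat.zero_lt_one h1D
    positivity
  rw [add_mul, one_mul, zpow_add₀ hD0]
  push_cast
  rw [zpow_natCast]

lemma Dpos (h1D : 1 ≤ D) : (0:ℝ) < (D:ℝ) := by
  exact_mod_cast Nat.lt_of_lt_of_le Nat.zero_lt_one h1D

lemma div_facts {a b : ℤ} (hb : 0 < b) : b * (a / b) ≤ a ∧ a + 1 ≤ b * (a / b + 1) := by
  have h1 := Int.emod_def a b
  have h2 := Int.emod_nonneg a (ne_of_gt hb)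
  have h3 := Int.emod_lt_of_pos a hb
  have h4 : b * (a / b + 1) = b * (a / b) + b := by ring
  constructor <;> linarith

lemma cparent_valid (h1D : 1 ≤ D) {J : DCube dd} (hJ : J.valid α D) (hs : J.s < 0) :
    (cparent α D J).valid α D := by
  refine ⟨by simpa [cparent] using hs, fun i => ?_⟩
  have hM : (0:ℤ) < (D:ℤ) ^ (α i) := by positivity
  obtain ⟨hd1, hd2⟩ := div_facts (a := J.k i) hM
  constructor
  · exact Int.ediv_nonneg (hJ.2 i).1 (le_of_lt hM)
  · have hpos : (0:ℝ) < (D:ℝ) ^ (J.s * (α i : ℤ)) := zpow_pos (Dpos h1D) _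
    have : (D:ℝ) ^ ((J.s + 1) * (α i : ℤ)) * (J.k i / (D:ℤ) ^ (α i) : ℤ) ≤
        (D:ℝ) ^ (J.s * (α i : ℤ)) * (J.k i : ℝ) := by
      rw [scale_split h1D]
      calc (D:ℝ)^(J.s*(α i:ℤ)) * (((D:ℤ)^(α i) : ℤ) : ℝ) * ((J.k i / (D:ℤ)^(α i) : ℤ) : ℝ)
          = (D:ℝ)^(J.s*(α i:ℤ)) * (((D:ℤ)^(α i) * (J.k i / (D:ℤ)^(α i)) : ℤ) : ℝ) := by
            push_cast; ring
        _ ≤ (D:ℝ)^(J.s*(α i:ℤ)) * (J.k i : ℝ) := by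
            apply mul_le_mul_of_nonneg_left _ (le_of_lt hpos)
            exact_mod_cast hd1
    calc (D:ℝ) ^ ((cparent α D J).s * (α i : ℤ)) * ((cparent α D J).k i : ℝ)
        = (D:ℝ) ^ ((J.s + 1) * (α i : ℤ)) * ((J.k i / (D:ℤ) ^ (α i) : ℤ) : ℝ) := by rfl
      _ ≤ (D:ℝ) ^ (J.s * (α i : ℤ)) * (J.k i : ℝ) := this
      _ < 1 := (hJ.2 i).2

lemma subset_cparent (h1D : 1 ≤ D) (J : DCube dd) :
    J.toSet α D ⊆ (cparent α D J).toSet α D := by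
  intro x hx i
  have hM : (0:ℤ) < (D:ℤ) ^ (α i) := by positivity
  obtain ⟨hd1, hd2⟩ := div_facts (a := J.k i) hM
  have hpos : (0:ℝ) < (D:ℝ) ^ (J.s * (α i : ℤ)) := zpow_pos (Dpos h1D) _
  obtain ⟨hx1, hx2⟩ := hx i
  constructor
  · calc (D:ℝ) ^ ((J.s + 1) * (α i : ℤ)) * ((J.k i / (D:ℤ) ^ (α i) : ℤ) : ℝ)
        = (D:ℝ)^(J.s*(α i:ℤ)) * (((D:ℤ)^(α i) * (J.k i / (D:ℤ)^(α i)) : ℤ) : ℝ) := by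
          rw [scale_split h1D]; push_cast; ring
      _ ≤ (D:ℝ)^(J.s*(α i:ℤ)) * (J.k i : ℝ) := by
          apply mul_le_mul_of_nonneg_left _ (le_of_lt hpos); exact_mod_cast hd1
      _ ≤ x i := hx1
  · calc x i < (D:ℝ)^(J.s*(α i:ℤ)) * ((J.k i : ℝ) + 1) := hx2
      _ = (D:ℝ)^(J.s*(α i:ℤ)) * (((J.k i + 1 : ℤ)) : ℝ) := by push_cast; ring
      _ ≤ (D:ℝ)^(J.s*(α i:ℤ)) * (((D:ℤ)^(α i) * (J.k i / (D:ℤ)^(α i) + 1) : ℤ) : ℝ) := by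
          apply mul_le_mul_of_nonneg_left _ (le_of_lt hpos); exact_mod_cast hd2
      _ = (D:ℝ) ^ ((J.s + 1) * (α i : ℤ)) * (((J.k i / (D:ℤ) ^ (α i) : ℤ) : ℝ) + 1) := by
          rw [scale_split h1D]; push_cast; ring

lemma nested_of_inter (h1D : 1 ≤ D) {J J' : DCube dd} (hs : J.s ≤ J'.s)
    {x : Fin dd → ℝ} (hxJ : x ∈ J.toSet α D) (hxJ' : x ∈ J'.toSet α D) :
    J.toSet α D ⊆ J'.toSet α D := by
  intro y hy i
  have hD0 : (D:ℝ) ≠ 0 := ne_of_gt (Dpos h1D)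
  set h := (D:ℝ)^(J.s * (α i:ℤ)) with hh
  set H := (D:ℝ)^(J'.s * (α i:ℤ)) with hH
  set M : ℤ := (D:ℤ)^((J'.s - J.s).toNat * α i) with hM
  have hhpos : 0 < h := zpow_pos (Dpos h1D) _
  have hHM : H = h * (M:ℝ) := by
    have hexp : J'.s * (α i:ℤ) = J.s * (α i:ℤ) + (((J'.s - J.s).toNat * α i : ℕ) : ℤ) := by
      push_cast [Int.toNat_of_nonneg (by linarith : (0:ℤ) ≤ J'.s - J.s)]
      ring
    rw [hH, hexp, zpow_add₀ hD0, hh, hM, zpow_natCast]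
    push_cast
    ring
  obtain ⟨ha1, ha2⟩ := hxJ i
  obtain ⟨hb1, hb2⟩ := hxJ' i
  set c := J.k i
  set b := J'.k i
  have h1R : (M:ℝ) * b < c + 1 := by
    have : h * ((M:ℝ) * b) < h * (c + 1) := by
      rw [← mul_assoc, ← hHM]
      calc H * (b:ℝ) ≤ x i := hb1
        _ < h * ((c:ℝ) + 1) := ha2
    exact lt_of_mul_lt_mul_left (by linarith) (le_of_lt hhpos)
  have h2R : (c:ℝ) < M * (b + 1) := by
    have : h * (c:ℝ) < h * ((M:ℝ) * (b + 1)) := by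
      rw [← mul_assoc, ← hHM]
      calc h * (c:ℝ) ≤ x i := ha1
        _ < H * ((b:ℝ) + 1) := hb2
    exact lt_of_mul_lt_mul_left (by linarith) (le_of_lt hhpos)
  have h1Z : M * b ≤ c := by
    have : M * b < c + 1 := by exact_mod_cast h1R
    omega
  have h2Z : c + 1 ≤ M * (b + 1) := by
    have : c < M * (b + 1) := by exact_mod_cast h2R
    omega
  obtain ⟨hy1, hy2⟩ := hy i
  constructor
  · calc H * (b:ℝ) = h * ((M * b : ℤ) : ℝ) := by rw [hHM]; push_cast; ring
      _ ≤ h * (c:ℝ) := by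
          apply mul_le_mul_of_nonneg_left _ (le_of_lt hhpos); exact_mod_cast h1Z
      _ ≤ y i := hy1
  · calc y i < h * ((c:ℝ) + 1) := hy2
      _ = h * ((c + 1 : ℤ) : ℝ) := by push_cast; ring
      _ ≤ h * ((M * (b+1) : ℤ) : ℝ) := by
          apply mul_le_mul_of_nonneg_left _ (le_of_lt hhpos); exact_mod_cast h2Z
      _ = H * ((b:ℝ) + 1) := by rw [hHM]; push_cast; ring

lemma scale_le_of_subset (h2D : 2 ≤ D) (hdd : 0 < dd) (hα : ∀ i, 0 < α i)
    {J J' : DCube dd} (hss : J.toSet α D ⊆ J'.toSet α D) : J.s ≤ J'.s := by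
  have h1D : 1 ≤ D := le_trans (by norm_num) h2D
  by_contra hlt
  push_neg at hlt
  obtain ⟨i0⟩ : Nonempty (Fin dd) := ⟨⟨0, hdd⟩⟩
  have hhpos : 0 < (D:ℝ)^(J.s * (α i0:ℤ)) := zpow_pos (Dpos h1D) _
  have hHpos : 0 < (D:ℝ)^(J'.s * (α i0:ℤ)) := zpow_pos (Dpos h1D) _
  have hcmem : (fun i => (D:ℝ)^(J.s*(α i:ℤ)) * J.k i) ∈ J.toSet α D := corner_mem α D h1D J
  have hxmem : Function.update (fun i => (D:ℝ)^(J.s*(α i:ℤ)) * J.k i) i0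
      ((D:ℝ)^(J.s*(α i0:ℤ)) * J.k i0 + (D:ℝ)^(J.s*(α i0:ℤ))/2) ∈ J.toSet α D := by
    intro i
    by_cases hci : i = i0
    · subst hci
      rw [Function.update_self]
      constructor
      · linarith [le_refl ((D:ℝ)^(J.s*(α i:ℤ)) * J.k i)]
      · have : (D:ℝ)^(J.s*(α i:ℤ)) * ((J.k i:ℝ) + 1) =
            (D:ℝ)^(J.s*(α i:ℤ)) * J.k i + (D:ℝ)^(J.s*(α i:ℤ)) := by ring
        rw [this]
        linarith
    · rw [Function.update_of_ne hci]
      exact hcmem i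
  have hc' := (hss hcmem) i0
  have hx' := (hss hxmem) i0
  rw [Function.update_self] at hx'
  have hHb : (D:ℝ)^(J'.s*(α i0:ℤ)) * ((J'.k i0 : ℝ) + 1) =
      (D:ℝ)^(J'.s*(α i0:ℤ)) * (J'.k i0 : ℝ) + (D:ℝ)^(J'.s*(α i0:ℤ)) := by ring
  have hhalf : (D:ℝ)^(J.s*(α i0:ℤ))/2 < (D:ℝ)^(J'.s*(α i0:ℤ)) := by
    have l1 := hc'.1
    have l2 := hx'.2
    rw [hHb] at l2
    linarith
  have hge : 2 * (D:ℝ)^(J'.s*(α i0:ℤ)) ≤ (D:ℝ)^(J.s*(α i0:ℤ)) := by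
    have hs1 : J'.s + 1 ≤ J.s := hlt
    have hmono : (D:ℝ) ^ ((J'.s + 1) * (α i0:ℤ)) ≤ (D:ℝ) ^ (J.s * (α i0:ℤ)) := by
      apply zpow_le_zpow_right₀ (by exact_mod_cast h1D)
      have : (0:ℤ) < (α i0 : ℤ) := by exact_mod_cast hα i0
      nlinarith
    have hsplit : (D:ℝ) ^ ((J'.s + 1) * (α i0:ℤ)) =
        (D:ℝ)^(J'.s*(α i0:ℤ)) * (((D:ℤ)^(α i0) : ℤ) : ℝ) := scale_split h1D _ _
    have hDa : (2:ℝ) ≤ (((D:ℤ)^(α i0) : ℤ) : ℝ) := by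
      have h1 : (D:ℝ) ≤ (D:ℝ) ^ (α i0) := le_self_pow₀ (by exact_mod_cast h1D) (hα i0).ne'
      have h2 : (2:ℝ) ≤ (D:ℝ) := by exact_mod_cast h2D
      push_cast
      linarith
    have hm2 : (D:ℝ)^(J'.s*(α i0:ℤ)) * 2 ≤ (D:ℝ)^(J'.s*(α i0:ℤ)) * (((D:ℤ)^(α i0) : ℤ) : ℝ) :=
      mul_le_mul_of_nonneg_left hDa (le_of_lt hHpos)
    calc 2 * (D:ℝ)^(J'.s*(α i0:ℤ)) = (D:ℝ)^(J'.s*(α i0:ℤ)) * 2 := by ring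
      _ ≤ (D:ℝ)^(J'.s*(α i0:ℤ)) * (((D:ℤ)^(α i0) : ℤ) : ℝ) := hm2
      _ = (D:ℝ) ^ ((J'.s + 1) * (α i0:ℤ)) := hsplit.symm
      _ ≤ (D:ℝ) ^ (J.s * (α i0:ℤ)) := hmono
  linarith

lemma eq_of_ss_same_scale (h1D : 1 ≤ D) {J J' : DCube dd}
    (hss : J.toSet α D ⊆ J'.toSet α D) (hsc : J.s = J'.s) : J = J' := by
  have hk : J.k = J'.k := by
    funext i
    have hc := (hss (corner_mem α D h1D J)) i
    have hhpos : 0 < (D:ℝ)^(J.s * (α i:ℤ)) := zpow_pos (Dpos h1D) _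
    rw [← hsc] at hc
    obtain ⟨l1, l2⟩ := hc
    have b1 : (J'.k i : ℝ) ≤ J.k i := le_of_mul_le_mul_left (by linarith) hhpos
    have b2 : (J.k i : ℝ) < J'.k i + 1 := lt_of_mul_lt_mul_left (by linarith) (le_of_lt hhpos)
    have bz1 : J'.k i ≤ J.k i := by exact_mod_cast b1
    have bz2 : J.k i < J'.k i + 1 := by exact_mod_cast b2
    omega
  cases J; cases J'
  simp_all

lemma ancestor (h2D : 2 ≤ D) (hdd : 0 < dd) (hα : ∀ i, 0 < α i) :
    ∀ (m : ℕ) (J J' : DCube dd), J.valid α D → J'.valid α D →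
      J.toSet α D ⊆ J'.toSet α D → (J'.s - J.s).toNat = m →
      (cparent α D)^[m] J = J' := by
  have h1D : 1 ≤ D := le_trans (by norm_num) h2D
  intro m
  induction m with
  | zero =>
    intro J J' hJ hJ' hss htn
    have hle : J.s ≤ J'.s := scale_le_of_subset h2D hdd hα hss
    have : J.s = J'.s := by omega
    simpa using eq_of_ss_same_scale h1D hss this
  | succ n ih =>
    intro J J' hJ hJ' hss htn
    have hle : J.s ≤ J'.s := scale_le_of_subset h2D hdd hα hss
    have hlt : J.s < J'.s := by omega
    have hsneg : J.s < 0 := lt_of_lt_of_le hlt hJ'.1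
    have hpv : (cparent α D J).valid α D := cparent_valid h1D hJ hsneg
    have hpsub : J.toSet α D ⊆ (cparent α D J).toSet α D := subset_cparent h1D J
    have hcmem : (fun i => (D : ℝ) ^ (J.s * (α i : ℤ)) * J.k i) ∈ J.toSet α D :=
      corner_mem α D h1D J
    have hps : (cparent α D J).s = J.s + 1 := rfl
    have hpss : (cparent α D J).toSet α D ⊆ J'.toSet α D := by
      apply nested_of_inter h1D (by omega : (cparent α D J).s ≤ J'.s)
        (hpsub hcmem) (hss hcmem)
    rw [Function.iterate_succ_apply]
    exact ih (cparent α D J) J' hpv hJ' hpss (by omega)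


lemma prestep (h1D : 1 ≤ D)
    (hcomp : ∀ J : DCube dd, J.valid α D → J.s < 0 →
      ∀ Q ∈ QSpace dd d, 10^4 * qnorm Q (J.toSet α D) ≤ qnorm Q ((cparent α D J).toSet α D))
    {J : DCube dd} (hJ : J.valid α D) (hsneg : J.s < 0) (n : ℕ) :
    PreGood α D d (1/10000) J (part α D d n (cparent α D J)) := by
  obtain ⟨⟨hc, hsm, hun, hdis⟩, -⟩ :=
    good_part (α := α) (D := D) (d := d) h1D n (cparent α D J)
  refine ⟨hc, ?_, hun, hdis⟩
  intro p hp Q hQ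
  obtain ⟨hQsp, hQn⟩ := hsm p hp Q hQ
  have hsub : Q - p.2 ∈ QSpace dd d := qspace_sub hQsp (hc p hp).1
  have hcmp := hcomp J hJ hsneg _ hsub
  refine ⟨hQsp, ?_⟩
  nlinarith [hcmp, hQn]

lemma refine_step (h1D : 1 ≤ D)
    (hcomp : ∀ J : DCube dd, J.valid α D → J.s < 0 →
      ∀ Q ∈ QSpace dd d, 10^4 * qnorm Q (J.toSet α D) ≤ qnorm Q ((cparent α D J).toSet α D))
    {J : DCube dd} (hJ : J.valid α D) (hsneg : J.s < 0) (n : ℕ) :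
    ∀ p ∈ part α D d n (cparent α D J), ∃ q ∈ part α D d (n+1) J, p.1 ⊆ q.1 := by
  have h := pick_refines h1D J (part α D d n (cparent α D J)) (prestep h1D hcomp hJ hsneg n)
  have hEq : part α D d (n+1) J = pick α D d J (part α D d n (cparent α D J)) := by
    simp only [part]
  intro p hp
  rw [hEq]
  exact h p hp

lemma refine_iter (h1D : 1 ≤ D)
    (hcomp : ∀ J : DCube dd, J.valid α D → J.s < 0 →
      ∀ Q ∈ QSpace dd d, 10^4 * qnorm Q (J.toSet α D) ≤ qnorm Q ((cparent α D J).toSet α D))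
    (s_max : ℤ) (hsm0 : s_max ≤ 0) :
    ∀ (m : ℕ) (J : DCube dd), J.valid α D → J.s + m ≤ s_max →
      ∀ p ∈ part α D d ((s_max - J.s - m).toNat) ((cparent α D)^[m] J),
        ∃ q ∈ part α D d ((s_max - J.s).toNat) J, p.1 ⊆ q.1 := by
  intro m
  induction m with
  | zero =>
    intro J hJ hle p hp
    refine ⟨p, ?_, subset_rfl⟩
    simpa using hp
  | succ n ih =>
    intro J hJ hle p hp
    have hsneg : J.s < 0 := by omega
    have hpv := cparent_valid h1D hJ hsneg
    rw [Function.iterate_succ_apply] at hp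
    have hps : (cparent α D J).s = J.s + 1 := rfl
    have harg : s_max - (cparent α D J).s - (n : ℤ) = s_max - J.s - ((n+1 : ℕ) : ℤ) := by
      rw [hps]; push_cast; ring
    obtain ⟨q, hq, hpq⟩ := ih (cparent α D J) hpv
      (by rw [hps]; push_cast at hle ⊢; omega) p (by rw [harg]; exact hp)
    rw [hps] at hq
    have hidx : (s_max - J.s).toNat = (s_max - (J.s + 1)).toNat + 1 := by
      push_cast at hle; omega
    obtain ⟨r, hr, hqr⟩ := refine_step h1D hcomp hJ hsneg ((s_max - (J.s+1)).toNat) q hq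
    rw [hidx]
    exact ⟨r, hr, hpq.trans hqr⟩

lemma qspace_eq_zero_of_dd (hdd : dd = 0) {Q : MvPolynomial (Fin dd) ℝ}
    (hQ : Q ∈ QSpace dd d) : Q = 0 := by
  haveI : IsEmpty (Fin dd) := by subst hdd; infer_instance
  obtain ⟨c, rfl⟩ := MvPolynomial.C_surjective (Fin dd) Q
  have h2 := hQ.2
  rw [MvPolynomial.coeff_C] at h2
  simp at h2
  rw [h2, map_zero]

lemma qspace_eq_zero_of_d (hd : d = 0) {Q : MvPolynomial (Fin dd) ℝ}
    (hQ : Q ∈ QSpace dd d) : Q = 0 := by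
  obtain ⟨h1, h2⟩ := hQ
  rw [hd] at h1
  ext m
  rcases eq_or_ne m 0 with rfl | hm
  · simpa using h2
  · rw [MvPolynomial.coeff_zero]
    by_contra hne
    have hsupp : m ∈ Q.support := MvPolynomial.mem_support_iff.2 hne
    have hle : m.sum (fun _ e => e) ≤ Q.totalDegree := MvPolynomial.le_totalDegree hsupp
    have hz : m.sum (fun _ e => e) = 0 := by omega
    have hall : ∀ a ∈ m.support, m a = 0 := fun a ha => Finset.sum_eq_zero_iff.1 hz a ha
    apply hm
    ext a
    by_cases ha : a ∈ m.support
    · exact hall a ha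
    · simpa using Finsupp.notMem_support_iff.1 ha

end Aux

theorem statement8 (dd d : ℕ) (α : Fin dd → ℕ) (hα : ∀ i, 0 < α i) (hmono : Monotone α)
    (D : ℕ) (hDpow : ∃ k : ℕ, D = 2 ^ k)
    (hD : ∀ (I Ihat : DCube dd), I.valid α D → Ihat.valid α D →
      I.s < 0 → Ihat.s = I.s + 1 → I.toSet α D ⊆ Ihat.toSet α D →
      ∀ Q ∈ QSpace dd d, 10 ^ 4 * qnorm Q (I.toSet α D) ≤ qnorm Q (Ihat.toSet α D))
    (s_min s_max : ℤ) (h₁ : s_min ≤ s_max) (h₂ : s_max ≤ 0) :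
    ∃ 𝔓 : DCube dd → Set (Set (MvPolynomial (Fin dd) ℝ) × MvPolynomial (Fin dd) ℝ),
      ∀ I : DCube dd, I.valid α D → s_min ≤ I.s → I.s ≤ s_max →
        -- (1) central polynomials
        (∀ p ∈ 𝔓 I, p.2 ∈ p.1 ∧
            qball d (I.toSet α D) p.2 0.2 ⊆ p.1 ∧ p.1 ⊆ qball d (I.toSet α D) p.2 1) ∧
        -- (2) the uncertainty regions form a disjoint cover of 𝒬
        (⋃ p ∈ 𝔓 I, p.1) = QSpace dd d ∧
        (∀ p ∈ 𝔓 I, ∀ p' ∈ 𝔓 I, p ≠ p' → p.1 ∩ p'.1 = ∅) ∧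
        -- (3) nesting
        (∀ I' : DCube dd, I'.valid α D → s_min ≤ I'.s → I'.s ≤ s_max →
          I.toSet α D ⊆ I'.toSet α D →
          ∀ p ∈ 𝔓 I, ∀ p' ∈ 𝔓 I', p.1 ∩ p'.1 = ∅ ∨ p'.1 ⊆ p.1) := by
  have h1D : 1 ≤ D := by
    obtain ⟨k, rfl⟩ := hDpow
    exact Nat.one_le_two_pow
  refine ⟨fun I => Aux.part α D d ((s_max - I.s).toNat) I, fun I hI hImin hImax => ?_⟩
  obtain ⟨⟨hc, hsm, hun, hdis⟩, hball⟩ :=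
    Aux.good_part (α := α) (D := D) (d := d) h1D ((s_max - I.s).toNat) I
  refine ⟨?_, hun, hdis, ?_⟩
  · -- (1)
    intro p hp
    refine ⟨(hc p hp).2, ?_, ?_⟩
    · intro Q hQ
      exact hball p hp Q hQ.1 hQ.2
    · intro Q hQ
      obtain ⟨hQ1, hQ2⟩ := hsm p hp Q hQ
      exact ⟨hQ1, hQ2.trans (by norm_num)⟩
  · -- (3)
    intro I' hI' hmin' hmax' hss p hp p' hp'
    obtain ⟨⟨hc', hsm', hun', hdis'⟩, hball'⟩ :=
      Aux.good_part (α := α) (D := D) (d := d) h1D ((s_max - I'.s).toNat) I'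
    by_cases hQtriv : ∀ Q ∈ QSpace dd d, Q = (0 : MvPolynomial (Fin dd) ℝ)
    · right
      intro Q hQ
      have hQ0 : Q = 0 := hQtriv Q (hsm' p' hp' Q hQ).1
      have hp20 : p.2 = (0 : MvPolynomial (Fin dd) ℝ) := hQtriv _ (hc p hp).1
      rw [hQ0, ← hp20]
      exact (hc p hp).2
    · -- nontrivial: dd ≥ 1 and d ≥ 1
      have hdd : 0 < dd := by
        by_contra h0
        exact hQtriv fun Q hQ => Aux.qspace_eq_zero_of_dd (by omega) hQ
      have hd1 : 1 ≤ d := by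
        by_contra h0
        exact hQtriv fun Q hQ => Aux.qspace_eq_zero_of_d (by omega) hQ
      by_cases hD2 : 2 ≤ D
      · -- main case
        have hle : I.s ≤ I'.s := Aux.scale_le_of_subset hD2 hdd hα hss
        have hIm : (Aux.cparent α D)^[(I'.s - I.s).toNat] I = I' :=
          Aux.ancestor hD2 hdd hα ((I'.s - I.s).toNat) I I' hI hI' hss rfl
        have hcomp : ∀ J : DCube dd, J.valid α D → J.s < 0 →
            ∀ Q ∈ QSpace dd d, 10^4 * qnorm Q (J.toSet α D) ≤
              qnorm Q ((Aux.cparent α D J).toSet α D) := fun J hJ hs Q hQ =>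
          hD J _ hJ (Aux.cparent_valid h1D hJ hs) hs rfl (Aux.subset_cparent h1D J) Q hQ
        have hiter := Aux.refine_iter h1D hcomp s_max h₂ ((I'.s - I.s).toNat) I hI
          (by omega)
        have hidx : s_max - I.s - ((I'.s - I.s).toNat : ℤ) = s_max - I'.s := by omega
        obtain ⟨q, hq, hsub⟩ := hiter p' (by rw [hidx, hIm]; exact hp')
        rcases eq_or_ne p q with rfl | hne
        · exact Or.inr hsub
        · left
          have hdq := hdis p hp q hq hne
          rw [Set.eq_empty_iff_forall_notMem] at hdq ⊢
          intro Q hQ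
          exact hdq Q ⟨hQ.1, hsub hQ.2⟩
      · -- D = 1 : contradiction with hD
        exfalso
        have hDone : D = 1 := by omega
        obtain ⟨i0⟩ : Nonempty (Fin dd) := ⟨⟨0, hdd⟩⟩
        have hcast : (D:ℝ) = 1 := by rw [hDone]; norm_num
        have hset : ∀ J : DCube dd, J.k = (fun _ => 0) →
            J.toSet α D = {x : Fin dd → ℝ | ∀ i, 0 ≤ x i ∧ x i < 1} := by
          intro J hk
          ext x
          simp [DCube.toSet, hcast, hk]
        have hv1 : (⟨-1, fun _ => 0⟩ : DCube dd).valid α D :=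
          ⟨by norm_num, fun i => ⟨le_rfl, by simp [hcast]⟩⟩
        have hv2 : (⟨0, fun _ => 0⟩ : DCube dd).valid α D :=
          ⟨le_rfl, fun i => ⟨le_rfl, by simp [hcast]⟩⟩
        have hXQ : MvPolynomial.X i0 ∈ QSpace dd d :=
          ⟨by rw [MvPolynomial.totalDegree_X]; exact hd1, MvPolynomial.coeff_zero_X i0⟩
        have hs1 : (⟨-1, fun _ => 0⟩ : DCube dd).toSet α D =
            {x : Fin dd → ℝ | ∀ i, 0 ≤ x i ∧ x i < 1} := hset _ rfl
        have hs2 : (⟨0, fun _ => 0⟩ : DCube dd).toSet α D =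
            {x : Fin dd → ℝ | ∀ i, 0 ≤ x i ∧ x i < 1} := hset _ rfl
        have key := hD ⟨-1, fun _ => 0⟩ ⟨0, fun _ => 0⟩ hv1 hv2 (by norm_num) (by norm_num)
          (by rw [hs1, hs2]) (MvPolynomial.X i0) hXQ
        rw [hs1, hs2] at key
        set S := {x : Fin dd → ℝ | ∀ i, 0 ≤ x i ∧ x i < 1} with hS
        have hb : ∀ x ∈ S, ∀ y ∈ S,
            |MvPolynomial.eval x (MvPolynomial.X i0) - MvPolynomial.eval y (MvPolynomial.X i0)| ≤ 1 := by
          intro x hx y hy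
          rw [MvPolynomial.eval_X, MvPolynomial.eval_X]
          have h1 := hx i0
          have h2 := hy i0
          rw [abs_le]
          constructor <;> [linarith [h1.1, h2.2]; linarith [h1.2, h2.1]]
        have hm1 : (fun _ : Fin dd => (1/2:ℝ)) ∈ S := fun i => by norm_num
        have hm0 : (fun _ : Fin dd => (0:ℝ)) ∈ S := fun i => by norm_num
        have hlow := Aux.le_qnorm_aux (by norm_num : (0:ℝ) ≤ 1) hb hm1 hm0
        rw [MvPolynomial.eval_X, MvPolynomial.eval_X] at hlow
        norm_num at hlow
        linarith

end
end
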